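/- arXiv:0903.5458 — 10 statements merged into one kernel-verified Lean document; each statement's English description precedes it below -/
import Mathlib

section
/- Let (P_l)_{l∈ℕ} be a family of pairwise-orthogonal orthogonal projections on a complex Hilbert space H, let (h_l) be real numbers, and set H_L := Σ_{l=0}^L h_l P_l. Let n ≥ 1 be an integer, let (s_l) be strictly positive real numbers, and let R be a bounded operator on H satisfying R P_l = s_l^{-n} P_l for every l. Then for all natural numbers L ≤ M and every t ∈ ℝ, ‖R (exp(i t H_M) − exp(i t H_L))‖ ≤ 2 √(Σ_{k=L+1}^{M} s_k^{-2n}). -/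
open NormedSpace
open scoped Nat

section Aux

variable {H : Type*} [NormedAddCommGroup H] [InnerProductSpace ℂ H] [CompleteSpace H]

lemma exp_smul_proj (P : H →L[ℂ] H) (hP : P * P = P) (a : ℂ) :
    exp (a • P) = 1 + (Complex.exp a - 1) • P := by
  have hpow : ∀ m : ℕ, (a • P) ^ (m + 1) = a ^ (m + 1) • P := by
    intro m
    induction m with
    | zero => simp
    | succ m ih =>
      rw [pow_succ, ih, smul_mul_assoc, mul_smul_comm, hP, smul_smul, ← pow_succ]
  have hsum : Summable fun m : ℕ => ((m ! : ℂ)⁻¹) • (a • P) ^ m :=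
    expSeries_summable' (𝕂 := ℂ) (a • P)
  have hsumC : Summable fun m : ℕ => ((m ! : ℂ)⁻¹) • a ^ m :=
    expSeries_summable' (𝕂 := ℂ) a
  have hexpC : Complex.exp a = ∑' m : ℕ, ((m ! : ℂ)⁻¹) • a ^ m := by
    rw [Complex.exp_eq_exp_ℂ, exp_eq_tsum (𝕂 := ℂ)]
  have hE : exp (a • P) = ∑' m : ℕ, ((m ! : ℂ)⁻¹) • (a • P) ^ m := by
    rw [exp_eq_tsum (𝕂 := ℂ)]
  rw [hE, Summable.tsum_eq_zero_add hsum]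
  have h1 : (fun m : ℕ => ((((m + 1) !) : ℂ)⁻¹ • (a • P) ^ (m + 1))) =
      fun m : ℕ => ((((m + 1)! : ℂ)⁻¹) • a ^ (m + 1)) • P := by
    funext m; rw [hpow, smul_smul, smul_eq_mul]
  simp only [h1, pow_zero, Nat.factorial_zero, Nat.cast_one, inv_one, one_smul]
  have hs1 : Summable (fun m : ℕ => (((m + 1)! : ℂ)⁻¹) • a ^ (m + 1)) :=
    (summable_nat_add_iff (f := fun m : ℕ => ((m ! : ℂ)⁻¹) • a ^ m) 1).2 hsumC
  rw [Summable.tsum_smul_const hs1]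
  congr 1
  have h2 := Summable.tsum_eq_zero_add hsumC
  rw [← hexpC] at h2
  have h3 : ∑' m : ℕ, (((m + 1)! : ℂ)⁻¹) • a ^ (m + 1) = Complex.exp a - 1 := by
    rw [eq_sub_iff_add_eq, add_comm]
    simpa using h2.symm
  rw [h3]

lemma exp_sum_proj (P : ℕ → H →L[ℂ] H)
    (hP_idem : ∀ l, P l * P l = P l)
    (hP_orth : ∀ l k, l ≠ k → P l * P k = 0)
    (a : ℕ → ℂ) (s : Finset ℕ) :
    exp (∑ l ∈ s, a l • P l) = 1 + ∑ l ∈ s, (Complex.exp (a l) - 1) • P l := by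
  classical
  induction s using Finset.induction_on with
  | empty => simp
  | @insert j s hj ih =>
    rw [Finset.sum_insert hj, Finset.sum_insert hj]
    have hcomm : Commute (a j • P j) (∑ l ∈ s, a l • P l) := by
      apply Commute.sum_right
      intro l hl
      have hne : j ≠ l := fun hjl => hj (hjl ▸ hl)
      show _ = _
      rw [smul_mul_smul_comm, smul_mul_smul_comm, hP_orth j l hne, hP_orth l j hne.symm,
        mul_comm]
    rw [(by let +nondep : NormedAlgebra ℚ (H →L[ℂ] H) := .restrictScalars ℚ ℂ _; exact exp_add_of_commute hcomm :
      exp (a j • P j + ∑ l ∈ s, a l • P l) = exp (a j • P j) * exp (∑ l ∈ s, a l • P l)), exp_smul_proj (P j) (hP_idem j), ih]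
    have hmul : ((Complex.exp (a j) - 1) • P j) * (∑ l ∈ s, (Complex.exp (a l) - 1) • P l) = 0 := by
      rw [Finset.mul_sum]
      apply Finset.sum_eq_zero
      intro l hl
      have hne : j ≠ l := fun hjl => hj (hjl ▸ hl)
      rw [smul_mul_smul_comm, hP_orth j l hne, smul_zero]
    rw [add_mul, one_mul, mul_add, mul_one, hmul, add_zero]
    abel

lemma norm_sum_sq_orth (s : Finset ℕ) (v : ℕ → H)
    (hv : ∀ i ∈ s, ∀ j ∈ s, i ≠ j → (inner ℂ (v i) (v j) : ℂ) = 0) :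
    ‖∑ i ∈ s, v i‖ ^ 2 = ∑ i ∈ s, ‖v i‖ ^ 2 := by
  classical
  have key : (inner ℂ (∑ i ∈ s, v i) (∑ j ∈ s, v j) : ℂ) = ∑ i ∈ s, (inner ℂ (v i) (v i) : ℂ) := by
    rw [sum_inner]
    apply Finset.sum_congr rfl
    intro i hi
    rw [inner_sum, Finset.sum_eq_single i]
    · intro j hj hji; exact hv i hi j hj (Ne.symm hji)
    · intro hi'; exact absurd hi hi'
  calc ‖∑ i ∈ s, v i‖ ^ 2 = RCLike.re (inner ℂ (∑ i ∈ s, v i) (∑ j ∈ s, v j) : ℂ) :=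
        (inner_self_eq_norm_sq _).symm
    _ = ∑ i ∈ s, RCLike.re (inner ℂ (v i) (v i) : ℂ) := by rw [key, map_sum]
    _ = ∑ i ∈ s, ‖v i‖ ^ 2 := by
        apply Finset.sum_congr rfl
        intro i _
        exact inner_self_eq_norm_sq (v i)

end Aux

/-- Quantitative estimate (proof of Proposition 1, part 1):
if `R` realizes `S^{-n}` (i.e. `R P_l = s_l^{-n} P_l`), then
`‖R (exp(i t H_M) − exp(i t H_L))‖ ≤ 2 √(Σ_{k=L+1}^M s_k^{-2n})`. -/
theorem stmt_3 {H : Type*} [NormedAddCommGroup H] [InnerProductSpace ℂ H] [CompleteSpace H]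
    (P : ℕ → H →L[ℂ] H)
    (hP_sa : ∀ l, IsSelfAdjoint (P l))
    (hP_idem : ∀ l, P l * P l = P l)
    (hP_orth : ∀ l k, l ≠ k → P l * P k = 0)
    (h : ℕ → ℝ)
    (HL : ℕ → H →L[ℂ] H)
    (hHL : ∀ L, HL L = ∑ l ∈ Finset.range (L + 1), (h l : ℂ) • P l)
    (n : ℕ) (hn : 1 ≤ n)
    (s : ℕ → ℝ) (hs : ∀ l, 0 < s l)
    (R : H →L[ℂ] H)
    (hR : ∀ l, R * P l = (((s l ^ n)⁻¹ : ℝ) : ℂ) • P l)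
    (L M : ℕ) (hLM : L ≤ M) (t : ℝ) :
    ‖R * (exp ((Complex.I * t) • HL M) - exp ((Complex.I * t) • HL L))‖ ≤
      2 * Real.sqrt (∑ k ∈ Finset.Ioc L M, (s k ^ (2 * n))⁻¹) := by
  classical
  set a : ℕ → ℂ := fun l => Complex.I * t * h l with ha
  have hexp : ∀ N : ℕ, exp ((Complex.I * t) • HL N) =
      1 + ∑ l ∈ Finset.range (N + 1), (Complex.exp (a l) - 1) • P l := by
    intro N
    rw [hHL N, Finset.smul_sum]
    have hsm : ∀ l, (Complex.I * t) • ((h l : ℂ) • P l) = a l • P l := by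
      intro l; rw [smul_smul]
    simp only [hsm]
    exact exp_sum_proj P hP_idem hP_orth a _
  have hsub : Finset.range (M + 1) \ Finset.range (L + 1) = Finset.Ioc L M := by
    ext x; simp only [Finset.mem_sdiff, Finset.mem_range, Finset.mem_Ioc]; omega
  have hdiff : exp ((Complex.I * t) • HL M) - exp ((Complex.I * t) • HL L) =
      ∑ l ∈ Finset.Ioc L M, (Complex.exp (a l) - 1) • P l := by
    rw [hexp M, hexp L, add_sub_add_left_eq_sub, ← hsub,
      Finset.sum_sdiff_eq_sub (Finset.range_subset_range.2 (by omega))]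
  set c : ℕ → ℂ := fun k => (Complex.exp (a k) - 1) * ((s k ^ n)⁻¹ : ℝ) with hc
  have hRD : R * (exp ((Complex.I * t) • HL M) - exp ((Complex.I * t) • HL L)) =
      ∑ k ∈ Finset.Ioc L M, c k • P k := by
    rw [hdiff, Finset.mul_sum]
    apply Finset.sum_congr rfl
    intro k _
    rw [mul_smul_comm, hR k, smul_smul]
  rw [hRD]
  -- bound on ‖c k‖
  have hck : ∀ k, ‖c k‖ ≤ 2 * (s k ^ n)⁻¹ := by
    intro k
    rw [hc]
    simp only [norm_mul]
    have h1 : ‖Complex.exp (a k) - 1‖ ≤ 2 := by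
      calc ‖Complex.exp (a k) - 1‖ ≤ ‖Complex.exp (a k)‖ + ‖(1 : ℂ)‖ := norm_sub_le _ _
        _ = 2 := by
          rw [Complex.norm_exp]
          have hre : (a k).re = 0 := by simp [ha, Complex.mul_re]
          rw [hre]; norm_num
    have h2 : ‖((((s k ^ n)⁻¹ : ℝ)) : ℂ)‖ = (s k ^ n)⁻¹ := by
      rw [Complex.norm_real, Real.norm_eq_abs, abs_of_pos (inv_pos.2 (pow_pos (hs k) n))]
    rw [h2]
    exact mul_le_mul_of_nonneg_right h1 (le_of_lt (inv_pos.2 (pow_pos (hs k) n)))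
  -- projections are contractions
  have hPnorm : ∀ k (x : H), ‖P k x‖ ≤ ‖x‖ := by
    intro k x
    rcases eq_or_lt_of_le (norm_nonneg (P k x)) with h0 | h0
    · rw [← h0]; exact norm_nonneg x
    have heq : (inner ℂ (P k x) (P k x) : ℂ) = inner ℂ x (P k x) := by
      have hPP : P k (P k x) = P k x := by
        have : P k (P k x) = (P k * P k) x := rfl
        rw [this, hP_idem k]
      calc (inner ℂ (P k x) (P k x) : ℂ) = inner ℂ x (P k (P k x)) :=
            (hP_sa k).isSymmetric x (P k x)
        _ = inner ℂ x (P k x) := by rw [hPP]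
    have hle : (‖P k x‖ : ℝ) ^ 2 ≤ ‖x‖ * ‖P k x‖ := by
      rw [← inner_self_eq_norm_sq (𝕜 := ℂ), heq]
      calc RCLike.re (inner ℂ x (P k x) : ℂ) ≤ ‖(inner ℂ x (P k x) : ℂ)‖ := RCLike.re_le_norm _
        _ ≤ ‖x‖ * ‖P k x‖ := norm_inner_le_norm x (P k x)
    nlinarith
  -- orthogonality of images
  have horth : ∀ i j, i ≠ j → ∀ x : H, (inner ℂ (P i x) (P j x) : ℂ) = 0 := by
    intro i j hij x
    have h1 : (inner ℂ (P i x) (P j x) : ℂ) = inner ℂ x (P i (P j x)) :=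
      (hP_sa i).isSymmetric x (P j x)
    have h0 : P i (P j x) = 0 := by
      have h2 : P i (P j x) = (P i * P j) x := rfl
      rw [h2, hP_orth i j hij]
      rfl
    rw [h1, h0, inner_zero_right]
  -- the pointwise bound
  set B : ℝ := 2 * Real.sqrt (∑ k ∈ Finset.Ioc L M, (s k ^ (2 * n))⁻¹) with hB
  have hSnonneg : (0 : ℝ) ≤ ∑ k ∈ Finset.Ioc L M, (s k ^ (2 * n))⁻¹ := by
    apply Finset.sum_nonneg; intro k _; exact le_of_lt (inv_pos.2 (pow_pos (hs k) _))
  have hBnonneg : 0 ≤ B := by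
    rw [hB]; positivity
  apply ContinuousLinearMap.opNorm_le_bound _ hBnonneg
  intro x
  have happly : (∑ k ∈ Finset.Ioc L M, c k • P k) x = ∑ k ∈ Finset.Ioc L M, c k • P k x := by
    simp
  rw [happly]
  have hsq : ‖∑ k ∈ Finset.Ioc L M, c k • P k x‖ ^ 2 ≤ (B * ‖x‖) ^ 2 := by
    rw [norm_sum_sq_orth _ _ (by
      intro i _ j _ hij
      rw [inner_smul_left, inner_smul_right, horth i j hij x, mul_zero, mul_zero])]
    have hterm : ∀ k ∈ Finset.Ioc L M,
        ‖c k • P k x‖ ^ 2 ≤ (4 * (s k ^ (2 * n))⁻¹) * ‖x‖ ^ 2 := by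
      intro k _
      rw [norm_smul]
      have hb : ‖c k‖ * ‖P k x‖ ≤ (2 * (s k ^ n)⁻¹) * ‖x‖ :=
        mul_le_mul (hck k) (hPnorm k x) (norm_nonneg _) (le_of_lt (mul_pos two_pos (inv_pos.2 (pow_pos (hs k) n))))
      have hnn : (0 : ℝ) ≤ ‖c k‖ * ‖P k x‖ := by positivity
      have := pow_le_pow_left₀ hnn hb 2
      calc (‖c k‖ * ‖P k x‖) ^ 2 ≤ ((2 * (s k ^ n)⁻¹) * ‖x‖) ^ 2 := this
        _ = (4 * (s k ^ (2 * n))⁻¹) * ‖x‖ ^ 2 := by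
          have : (s k ^ (2 * n))⁻¹ = ((s k ^ n)⁻¹) ^ 2 := by
            rw [mul_comm 2 n, pow_mul, ← inv_pow]
          rw [this]; ring
    calc ∑ k ∈ Finset.Ioc L M, ‖c k • P k x‖ ^ 2
        ≤ ∑ k ∈ Finset.Ioc L M, (4 * (s k ^ (2 * n))⁻¹) * ‖x‖ ^ 2 :=
          Finset.sum_le_sum hterm
      _ = 4 * (∑ k ∈ Finset.Ioc L M, (s k ^ (2 * n))⁻¹) * ‖x‖ ^ 2 := by
          rw [← Finset.sum_mul, ← Finset.mul_sum]
      _ = (B * ‖x‖) ^ 2 := by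
          rw [hB, mul_pow, mul_pow, Real.sq_sqrt hSnonneg]; ring
  have := Real.sqrt_le_sqrt hsq
  rwa [Real.sqrt_sq (norm_nonneg _), Real.sqrt_sq (by positivity)] at this
end

section
/- Let (P_l)_{l∈ℕ} be a family of pairwise-orthogonal orthogonal projections on a complex Hilbert space H, let (h_l) be real numbers, and set H_L := Σ_{l=0}^L h_l P_l. Let n ≥ 1 be an integer, let (s_l) be strictly positive real numbers with Σ_l s_l^{-2n} < ∞, and let R be a bounded operator on H satisfying R P_l = s_l^{-n} P_l for every l. Then for every t ∈ ℝ, lim_{L,M→∞} ‖R (exp(i t H_L) − exp(i t H_M))‖ = 0; that is, for every ε > 0 there exists N such that for all L, M ≥ N, ‖R (exp(i t H_L) − exp(i t H_M))‖ < ε. -/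
open NormedSpace

/-- Exponential of a scalar multiple of an idempotent. -/
lemma exp_smul_idem {A : Type*} [NormedRing A] [NormedAlgebra ℂ A] [CompleteSpace A]
    (c : ℂ) {p : A} (hp : p * p = p) :
    exp (c • p) = 1 + (exp c - 1) • p := by
  have hip : IsIdempotentElem p := hp
  have hterm : ∀ k : ℕ, ((k.factorial : ℂ))⁻¹ • (c • p) ^ k = (((k.factorial : ℂ))⁻¹ * c ^ k) • p ^ k := by
    intro k
    rw [smul_pow, smul_smul]
  have hsumA : Summable (fun k : ℕ => (((k.factorial : ℂ))⁻¹ * c ^ k) • p ^ k) := by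
    have := expSeries_summable' (𝕂 := ℂ) (c • p)
    simpa only [hterm] using this
  have hsum0 : Summable (fun k : ℕ => ((k.factorial : ℂ))⁻¹ * c ^ k) := by
    have := expSeries_summable' (𝕂 := ℂ) c
    simpa [smul_eq_mul] using this
  have hsum1 : Summable (fun k : ℕ => (((k+1).factorial : ℂ))⁻¹ * c ^ (k+1)) :=
    hsum0.comp_injective Nat.succ_injective
  have hsum0' : Summable (fun k : ℕ => ((k.factorial : ℂ))⁻¹ * c ^ k) := by
    simpa [smul_eq_mul] using hsum0
  have hc : exp c = 1 + ∑' k : ℕ, (((k+1).factorial : ℂ))⁻¹ * c ^ (k+1) := by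
    have hexp : exp c = ∑' k : ℕ, ((k.factorial : ℂ))⁻¹ * c ^ k := by
      rw [exp_eq_tsum (𝕂 := ℂ)]
      exact tsum_congr fun k => by rw [smul_eq_mul]
    rw [hexp]
    rw [hsum0'.tsum_eq_zero_add]
    simp only [smul_eq_mul, Nat.factorial_zero, Nat.cast_one, inv_one, pow_zero, mul_one, one_mul]
  calc exp (c • p) = ∑' k : ℕ, (((k.factorial : ℂ))⁻¹ * c ^ k) • p ^ k := by
        rw [exp_eq_tsum (𝕂 := ℂ)]; exact tsum_congr hterm
    _ = (((Nat.factorial 0 : ℂ))⁻¹ * c ^ 0) • p ^ 0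
        + ∑' k : ℕ, ((((k+1).factorial : ℂ))⁻¹ * c ^ (k+1)) • p ^ (k+1) :=
        hsumA.tsum_eq_zero_add
    _ = 1 + (∑' k : ℕ, (((k+1).factorial : ℂ))⁻¹ * c ^ (k+1)) • p := by
        simp only [hip.pow_succ_eq, pow_zero, Nat.factorial_zero, Nat.cast_one, inv_one,
          mul_one, one_smul]
        rw [hsum1.tsum_smul_const]
    _ = 1 + (exp c - 1) • p := by rw [hc, add_sub_cancel_left]

/-- Pythagoras for a finite family of pairwise orthogonal vectors. -/
lemma pyth_sum {E : Type*} [NormedAddCommGroup E] [InnerProductSpace ℂ E]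
    (F : Finset ℕ) (v : ℕ → E)
    (ho : ∀ i ∈ F, ∀ j ∈ F, i ≠ j → (inner ℂ (v i) (v j) : ℂ) = 0) :
    ‖∑ i ∈ F, v i‖ ^ 2 = ∑ i ∈ F, ‖v i‖ ^ 2 := by
  have hinner : (inner ℂ (∑ i ∈ F, v i) (∑ i ∈ F, v i) : ℂ)
      = ∑ i ∈ F, (inner ℂ (v i) (v i) : ℂ) := by
    rw [sum_inner]
    rw [Finset.sum_congr rfl fun i _ => inner_sum F v (v i)]
    exact Finset.sum_congr rfl (fun i hi => Finset.sum_eq_single_of_mem i hi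
      (fun j hj hji => ho i hi j hj (Ne.symm hji)))
  have hre := congrArg (RCLike.re (K := ℂ)) hinner
  rw [inner_self_eq_norm_sq, map_sum] at hre
  simpa [inner_self_eq_norm_sq, ← Complex.ofReal_pow, Complex.ofReal_re] using hre

/-- Norm bound for a combination of pairwise orthogonal projections. -/
lemma norm_sum_smul_proj {H : Type*} [NormedAddCommGroup H] [InnerProductSpace ℂ H]
    [CompleteSpace H]
    (P : ℕ → H →L[ℂ] H)
    (hP_sa : ∀ l, IsSelfAdjoint (P l))
    (hP_idem : ∀ l, P l * P l = P l)
    (hP_orth : ∀ l k, l ≠ k → P l * P k = 0)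
    (F : Finset ℕ) (a : ℕ → ℂ) :
    ‖∑ l ∈ F, a l • P l‖ ≤ Real.sqrt (∑ l ∈ F, ‖a l‖ ^ 2) := by
  have hadj : ∀ l (x y : H), (inner ℂ (P l x) y : ℂ) = inner ℂ x (P l y) := by
    intro l x y
    conv_lhs => rw [← (hP_sa l).adjoint_eq]
    exact ContinuousLinearMap.adjoint_inner_left (P l) y x
  have hPP : ∀ l k (x : H), l ≠ k → (inner ℂ (P l x) (P k x) : ℂ) = 0 := by
    intro l k x hlk
    rw [hadj l x (P k x)]
    have : P l (P k x) = (P l * P k) x := rfl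
    rw [this, hP_orth l k hlk]
    simp
  have hPnorm : ∀ l (x : H), ‖P l x‖ ≤ ‖x‖ := by
    intro l x
    have h1 : (inner ℂ (P l x) (P l x) : ℂ) = inner ℂ x (P l x) := by
      rw [hadj l x (P l x)]
      have : P l (P l x) = (P l * P l) x := rfl
      rw [this, hP_idem l]
    have h2 : ‖P l x‖ ^ 2 = RCLike.re (K := ℂ) (inner ℂ x (P l x)) := by
      rw [← h1, inner_self_eq_norm_sq (𝕜 := ℂ)]
    have h3 : RCLike.re (K := ℂ) (inner ℂ x (P l x)) ≤ ‖x‖ * ‖P l x‖ := by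
      calc RCLike.re (K := ℂ) (inner ℂ x (P l x)) ≤ ‖(inner ℂ x (P l x) : ℂ)‖ :=
            RCLike.re_le_norm _
        _ ≤ ‖x‖ * ‖P l x‖ := norm_inner_le_norm _ _
    nlinarith [norm_nonneg (P l x), norm_nonneg x]
  refine ContinuousLinearMap.opNorm_le_bound _ (Real.sqrt_nonneg _) fun x => ?_
  have happ : (∑ l ∈ F, a l • P l) x = ∑ l ∈ F, a l • P l x := by
    simp [ContinuousLinearMap.sum_apply]
  rw [happ]
  have hsq : ‖∑ l ∈ F, a l • P l x‖ ^ 2 = ∑ l ∈ F, ‖a l • P l x‖ ^ 2 := by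
    apply pyth_sum
    intro i hi j hj hij
    rw [inner_smul_left, inner_smul_right, hPP i j x hij]
    ring
  have hbound : ‖∑ l ∈ F, a l • P l x‖ ^ 2 ≤ (∑ l ∈ F, ‖a l‖ ^ 2) * ‖x‖ ^ 2 := by
    rw [hsq, Finset.sum_mul]
    apply Finset.sum_le_sum
    intro l _
    rw [norm_smul, mul_pow]
    exact mul_le_mul_of_nonneg_left (pow_le_pow_left₀ (norm_nonneg _) (hPnorm l x) 2)
      (sq_nonneg _)
  calc ‖∑ l ∈ F, a l • P l x‖ = Real.sqrt (‖∑ l ∈ F, a l • P l x‖ ^ 2) := by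
        rw [Real.sqrt_sq (norm_nonneg _)]
    _ ≤ Real.sqrt ((∑ l ∈ F, ‖a l‖ ^ 2) * ‖x‖ ^ 2) := Real.sqrt_le_sqrt hbound
    _ = Real.sqrt (∑ l ∈ F, ‖a l‖ ^ 2) * ‖x‖ := by
        rw [Real.sqrt_mul (Finset.sum_nonneg fun l _ => sq_nonneg _), Real.sqrt_sq (norm_nonneg _)]

/-- (Proposition 1, part 1.) If `(s_l^{-n}) ∈ ℓ²(ℕ)` and `R`
realizes `S^{-n}`, then `‖R (exp(i t H_L) − exp(i t H_M))‖ → 0` as `L, M → ∞`. -/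
theorem stmt_4 {H : Type*} [NormedAddCommGroup H] [InnerProductSpace ℂ H] [CompleteSpace H]
    (P : ℕ → H →L[ℂ] H)
    (hP_sa : ∀ l, IsSelfAdjoint (P l))
    (hP_idem : ∀ l, P l * P l = P l)
    (hP_orth : ∀ l k, l ≠ k → P l * P k = 0)
    (h : ℕ → ℝ)
    (HL : ℕ → H →L[ℂ] H)
    (hHL : ∀ L, HL L = ∑ l ∈ Finset.range (L + 1), (h l : ℂ) • P l)
    (n : ℕ) (hn : 1 ≤ n)
    (s : ℕ → ℝ) (hs : ∀ l, 0 < s l)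
    (hsum : Summable (fun l => (s l ^ (2 * n))⁻¹))
    (R : H →L[ℂ] H)
    (hR : ∀ l, R * P l = (((s l ^ n)⁻¹ : ℝ) : ℂ) • P l)
    (t : ℝ) :
    ∀ ε > 0, ∃ N : ℕ, ∀ L ≥ N, ∀ M ≥ N,
      ‖R * (exp ((Complex.I * t) • HL L) - exp ((Complex.I * t) • HL M))‖ < ε := by
  classical
  intro ε hε
  set c : ℕ → ℂ := fun l => exp (Complex.I * t * h l) - 1 with hcdef
  -- Key formula for the exponential of the regularized Hamiltonian
  have key : ∀ L, exp ((Complex.I * t) • HL L)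
      = 1 + ∑ l ∈ Finset.range (L + 1), c l • P l := by
    intro L
    rw [hHL L]
    induction L with
    | zero =>
      simp only [zero_add, Finset.range_one, Finset.sum_singleton]
      rw [smul_smul, exp_smul_idem _ (hP_idem 0)]
    | succ L ih =>
      rw [Finset.sum_range_succ (f := fun l => (h l : ℂ) • P l), smul_add]
      have hcomm : Commute ((Complex.I * t) • ∑ l ∈ Finset.range (L + 1), (h l : ℂ) • P l)
          ((Complex.I * t) • ((h (L+1) : ℂ) • P (L+1))) := by
        apply Commute.smul_left
        apply Commute.smul_right
        apply Commute.sum_left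
        intro l hl
        apply Commute.smul_left
        apply Commute.smul_right
        have hne : l ≠ L + 1 := fun hh => absurd (hh ▸ Finset.mem_range.mp hl) (lt_irrefl _)
        unfold Commute SemiconjBy
        rw [hP_orth l (L+1) hne, hP_orth (L+1) l (Ne.symm hne)]
      rw [exp_add_of_commute_of_mem_ball (𝕂 := ℂ) hcomm ((expSeries_radius_eq_top ℂ (H →L[ℂ] H)).symm ▸ edist_lt_top _ _) ((expSeries_radius_eq_top ℂ (H →L[ℂ] H)).symm ▸ edist_lt_top _ _), ih, smul_smul, exp_smul_idem _ (hP_idem (L+1))]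
      rw [Finset.sum_range_succ (f := fun l => c l • P l) (n := L + 1)]
      have horth : (∑ l ∈ Finset.range (L + 1), c l • P l)
          * ((exp (Complex.I * ↑t * ↑(h (L+1))) - 1) • P (L+1)) = 0 := by
        rw [Finset.sum_mul]
        apply Finset.sum_eq_zero
        intro l hl
        have hne : l ≠ L + 1 := fun hh => absurd (hh ▸ Finset.mem_range.mp hl) (lt_irrefl _)
        rw [smul_mul_smul_comm, hP_orth l (L+1) hne, smul_zero]
      rw [add_mul, one_mul, mul_add, mul_one, horth, add_zero]
      simp only [hcdef]
      abel
  -- bound on the coefficients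
  have hcbound : ∀ l, ‖c l‖ ≤ 2 := by
    intro l
    have h1 : ‖exp (Complex.I * t * h l)‖ = 1 := by
      rw [← Complex.exp_eq_exp_ℂ, Complex.norm_exp]
      have : (Complex.I * t * h l).re = 0 := by simp
      rw [this, Real.exp_zero]
    calc ‖c l‖ ≤ ‖exp (Complex.I * t * h l)‖ + ‖(1:ℂ)‖ := norm_sub_le _ _
      _ = 2 := by rw [h1]; norm_num
  -- the coefficient of the combined operator
  set a : ℕ → ℂ := fun l => c l * (((s l ^ n)⁻¹ : ℝ) : ℂ) with hadef
  have habound : ∀ l, ‖a l‖ ^ 2 ≤ 4 * (s l ^ (2 * n))⁻¹ := by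
    intro l
    have hsl : (0:ℝ) < s l ^ n := pow_pos (hs l) n
    have : ‖a l‖ ^ 2 = ‖c l‖ ^ 2 * ((s l ^ n)⁻¹) ^ 2 := by
      rw [hadef]
      simp only [norm_mul, mul_pow, Complex.norm_real, Real.norm_eq_abs,
        abs_of_pos (inv_pos.mpr hsl)]
    rw [this]
    have h2 : ((s l ^ n)⁻¹) ^ 2 = (s l ^ (2 * n))⁻¹ := by
      rw [inv_pow, ← pow_mul, mul_comm n 2]
    rw [h2]
    have h3 : (0:ℝ) ≤ (s l ^ (2 * n))⁻¹ := le_of_lt (inv_pos.mpr (pow_pos (hs l) _))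
    have h4 : ‖c l‖ ^ 2 ≤ 4 := by nlinarith [hcbound l, norm_nonneg (c l)]
    exact mul_le_mul_of_nonneg_right h4 h3
  -- choose N by the Cauchy criterion for the summable series
  have hδ : (0:ℝ) < ε ^ 2 / 4 := by positivity
  obtain ⟨u, hu⟩ := summable_iff_vanishing.mp hsum (Metric.ball 0 (ε ^ 2 / 4))
    (Metric.ball_mem_nhds 0 hδ)
  set N := u.sup id + 1 with hNdef
  refine ⟨N, ?_⟩
  -- main estimate for M ≤ L
  have main : ∀ L M, N ≤ M → M ≤ L →
      ‖R * (exp ((Complex.I * t) • HL L) - exp ((Complex.I * t) • HL M))‖ < ε := by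
    intro L M hNM hML
    set F := Finset.range (L + 1) \ Finset.range (M + 1) with hFdef
    have hdiff : exp ((Complex.I * t) • HL L) - exp ((Complex.I * t) • HL M)
        = ∑ l ∈ F, c l • P l := by
      rw [key L, key M]
      have hsub : Finset.range (M + 1) ⊆ Finset.range (L + 1) :=
        Finset.range_subset_range.mpr (by omega)
      rw [← Finset.sum_sdiff hsub]
      abel
    have hRsum : R * (∑ l ∈ F, c l • P l) = ∑ l ∈ F, a l • P l := by
      rw [Finset.mul_sum]
      refine Finset.sum_congr rfl fun l _ => ?_
      rw [mul_smul_comm, hR l, smul_smul]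
    rw [hdiff, hRsum]
    -- disjointness from u
    have hdisj : Disjoint F u := by
      rw [Finset.disjoint_left]
      intro l hlF hlu
      have h1 : l ≤ u.sup id := Finset.le_sup (f := id) hlu
      have h2 : M + 1 ≤ l := by
        rcases Finset.mem_sdiff.mp hlF with ⟨_, hl2⟩
        simpa [Finset.mem_range, Nat.lt_succ_iff, not_lt] using hl2
      omega
    have htail : ∑ l ∈ F, (s l ^ (2 * n))⁻¹ < ε ^ 2 / 4 := by
      have := hu F hdisj
      rw [Metric.mem_ball, dist_zero_right, Real.norm_eq_abs] at this
      calc ∑ l ∈ F, (s l ^ (2 * n))⁻¹ ≤ |∑ l ∈ F, (s l ^ (2 * n))⁻¹| := le_abs_self _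
        _ < ε ^ 2 / 4 := this
    have hnorm : ‖∑ l ∈ F, a l • P l‖ ≤ Real.sqrt (∑ l ∈ F, ‖a l‖ ^ 2) :=
      norm_sum_smul_proj P hP_sa hP_idem hP_orth F a
    have hsum2 : ∑ l ∈ F, ‖a l‖ ^ 2 < ε ^ 2 := by
      calc ∑ l ∈ F, ‖a l‖ ^ 2 ≤ ∑ l ∈ F, 4 * (s l ^ (2 * n))⁻¹ :=
            Finset.sum_le_sum fun l _ => habound l
        _ = 4 * ∑ l ∈ F, (s l ^ (2 * n))⁻¹ := by rw [Finset.mul_sum]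
        _ < 4 * (ε ^ 2 / 4) := by linarith
        _ = ε ^ 2 := by ring
    calc ‖∑ l ∈ F, a l • P l‖ ≤ Real.sqrt (∑ l ∈ F, ‖a l‖ ^ 2) := hnorm
      _ < Real.sqrt (ε ^ 2) := by
          apply Real.sqrt_lt_sqrt (Finset.sum_nonneg fun l _ => sq_nonneg _) hsum2
      _ = ε := Real.sqrt_sq hε.le
  intro L hL M hM
  rcases le_total M L with hML | hLM
  · exact main L M hM hML
  · have := main M L hL hLM
    rw [← norm_neg]
    convert this using 2
    · rfl
    rw [mul_sub, mul_sub]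
    abel
end

section
/- Let (P_l)_{l∈ℕ} be a family of pairwise-orthogonal orthogonal projections on a complex Hilbert space H which is complete in the sense that for every x ∈ H the series Σ_l P_l x converges to x. Let (s_l) be strictly positive real numbers with Σ_l s_l^{-2} < ∞, and let R be a bounded operator on H with R P_l = s_l^{-1} P_l for every l. Set Q_M := Σ_{l=0}^M P_l. Then for every M, ‖R (1 − Q_M)‖ ≤ √(Σ_{l=M+1}^{∞} s_l^{-2}); in particular ‖R(1 − Q_M)‖ → 0 as M → ∞. -/
open Filter

private lemma pyth_aux {H : Type*} [NormedAddCommGroup H] [InnerProductSpace ℂ H]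
    (f : ℕ → H) (t : Finset ℕ)
    (h : ∀ i ∈ t, ∀ j ∈ t, i ≠ j → (inner ℂ (f i) (f j) : ℂ) = 0) :
    ‖∑ i ∈ t, f i‖ ^ 2 = ∑ i ∈ t, ‖f i‖ ^ 2 := by
  classical
  have key : (inner ℂ (∑ i ∈ t, f i) (∑ j ∈ t, f j) : ℂ)
      = ∑ i ∈ t, (inner ℂ (f i) (f i) : ℂ) := by
    rw [sum_inner]
    refine Finset.sum_congr rfl fun i hi => ?_
    rw [inner_sum]
    refine Finset.sum_eq_single i (fun j hj hne => h i hi j hj (Ne.symm hne)) ?_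
    intro h'
    exact absurd hi h'
  calc ‖∑ i ∈ t, f i‖ ^ 2
      = RCLike.re (inner ℂ (∑ i ∈ t, f i) (∑ j ∈ t, f j) : ℂ) := norm_sq_eq_re_inner (𝕜 := ℂ) _
    _ = RCLike.re (∑ i ∈ t, (inner ℂ (f i) (f i) : ℂ)) := by rw [key]
    _ = ∑ i ∈ t, RCLike.re (inner ℂ (f i) (f i) : ℂ) := map_sum _ _ _
    _ = ∑ i ∈ t, ‖f i‖ ^ 2 := by
        refine Finset.sum_congr rfl fun i _ => ?_
        rw [← norm_sq_eq_re_inner (𝕜 := ℂ)]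

/-- For a complete pairwise-orthogonal family `(P_l)`, with `R`
realizing `S^{-1}` (`R P_l = s_l^{-1} P_l`) and `(s_l^{-1}) ∈ ℓ²(ℕ)`, we have
`‖R (1 − Q_M)‖ ≤ √(Σ_{l=M+1}^∞ s_l^{-2})`, and hence `‖R (1 − Q_M)‖ → 0`. -/
theorem stmt_6 {H : Type*} [NormedAddCommGroup H] [InnerProductSpace ℂ H] [CompleteSpace H]
    (P : ℕ → H →L[ℂ] H)
    (hP_sa : ∀ l, IsSelfAdjoint (P l))
    (hP_idem : ∀ l, P l * P l = P l)
    (hP_orth : ∀ l k, l ≠ k → P l * P k = 0)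
    (hP_complete : ∀ x : H, HasSum (fun l => P l x) x)
    (s : ℕ → ℝ) (hs : ∀ l, 0 < s l)
    (hsum : Summable (fun l => ((s l)⁻¹) ^ 2))
    (R : H →L[ℂ] H)
    (hR : ∀ l, R * P l = (((s l)⁻¹ : ℝ) : ℂ) • P l)
    (Q : ℕ → H →L[ℂ] H)
    (hQ : ∀ M, Q M = ∑ l ∈ Finset.range (M + 1), P l) :
    (∀ M, ‖R * (1 - Q M)‖ ≤ Real.sqrt (∑' j : ℕ, ((s (M + 1 + j))⁻¹) ^ 2)) ∧
    Tendsto (fun M => ‖R * (1 - Q M)‖) atTop (nhds 0) := by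
  have hadj : ∀ l (u v : H), (inner ℂ (P l u) v : ℂ) = inner ℂ u (P l v) := by
    intro l u v
    have h := hP_sa l
    rw [IsSelfAdjoint, ContinuousLinearMap.star_eq_adjoint] at h
    calc (inner ℂ (P l u) v : ℂ)
        = inner ℂ ((ContinuousLinearMap.adjoint (P l)) u) v := by rw [h]
      _ = inner ℂ u (P l v) := ContinuousLinearMap.adjoint_inner_left _ _ _
  have hPle : ∀ l (x : H), ‖P l x‖ ≤ ‖x‖ := by
    intro l x
    have h1 : ‖P l x‖ ^ 2 = RCLike.re (inner ℂ (P l x) (P l x) : ℂ) := norm_sq_eq_re_inner (𝕜 := ℂ) _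
    have hPl : P l (P l x) = P l x := by
      have := congrArg (fun (T : H →L[ℂ] H) => T x) (hP_idem l)
      simpa using this
    have h2 : (inner ℂ (P l x) (P l x) : ℂ) = inner ℂ x (P l x) := by
      rw [hadj, hPl]
    have h3 : RCLike.re (inner ℂ x (P l x) : ℂ) ≤ ‖x‖ * ‖P l x‖ := re_inner_le_norm _ _
    have h2' := congrArg RCLike.re h2
    nlinarith [norm_nonneg (P l x), norm_nonneg x]
  have hPP : ∀ l k (x : H), l ≠ k → (inner ℂ (P l x) (P k x) : ℂ) = 0 := by
    intro l k x hlk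
    rw [hadj]
    have h0 : P l (P k x) = 0 := by
      have := congrArg (fun (T : H →L[ℂ] H) => T x) (hP_orth l k hlk)
      simpa using this
    rw [h0, inner_zero_right]
  have key : ∀ M, ‖R * (1 - Q M)‖ ≤ Real.sqrt (∑' j : ℕ, ((s (M + 1 + j))⁻¹) ^ 2) := by
    intro M
    set C := ∑' j : ℕ, ((s (M + 1 + j))⁻¹) ^ 2 with hCdef
    have hgsum : Summable (fun j => ((s (M + 1 + j))⁻¹) ^ 2) := by
      have := (summable_nat_add_iff (M + 1)).mpr hsum
      simpa [add_comm] using this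
    have hC0 : 0 ≤ C := tsum_nonneg fun j => sq_nonneg _
    refine ContinuousLinearMap.opNorm_le_bound _ (Real.sqrt_nonneg _) fun x => ?_
    have h1 : HasSum (fun j => P (j + (M + 1)) x) ((1 - Q M) x) := by
      rw [hasSum_nat_add_iff (f := fun l => P l x) (M + 1)]
      have hx : (1 - Q M) x + ∑ i ∈ Finset.range (M + 1), P i x = x := by
        simp [hQ M, ContinuousLinearMap.sub_apply, ContinuousLinearMap.sum_apply]
      rw [hx]
      exact hP_complete x
    have h2 : HasSum (fun j => R (P (j + (M + 1)) x)) (R ((1 - Q M) x)) := h1.mapL R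
    have hterm : ∀ j : ℕ, R (P (j + (M + 1)) x)
        = (((s (j + (M + 1)))⁻¹ : ℝ) : ℂ) • P (j + (M + 1)) x := by
      intro j
      have := congrArg (fun (T : H →L[ℂ] H) => T x) (hR (j + (M + 1)))
      simpa using this
    have h3 : HasSum (fun j : ℕ => (((s (j + (M + 1)))⁻¹ : ℝ) : ℂ) • P (j + (M + 1)) x)
        (R ((1 - Q M) x)) := by
      simpa only [hterm] using h2
    set f : ℕ → H := fun j : ℕ => (((s (j + (M + 1)))⁻¹ : ℝ) : ℂ) • P (j + (M + 1)) x with hf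
    have hfin : ∀ t : Finset ℕ, ‖∑ j ∈ t, f j‖ ≤ Real.sqrt C * ‖x‖ := by
      intro t
      have horth : ∀ i ∈ t, ∀ j ∈ t, i ≠ j → (inner ℂ (f i) (f j) : ℂ) = 0 := by
        intro i _ j _ hij
        simp only [hf, inner_smul_left, inner_smul_right]
        rw [hPP (i + (M + 1)) (j + (M + 1)) x (by omega)]
        ring
      have hp := pyth_aux f t horth
      have hbound : ∑ j ∈ t, ‖f j‖ ^ 2 ≤ C * ‖x‖ ^ 2 := by
        have hle : ∀ j ∈ t, ‖f j‖ ^ 2 ≤ ((s (M + 1 + j))⁻¹) ^ 2 * ‖x‖ ^ 2 := by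
          intro j _
          have hnf : ‖f j‖ = (s (j + (M + 1)))⁻¹ * ‖P (j + (M + 1)) x‖ := by
            simp only [hf, norm_smul, Complex.norm_real, Real.norm_eq_abs]
            rw [abs_of_pos (inv_pos.mpr (hs _))]
          rw [hnf, add_comm (M + 1) j, mul_pow]
          have h4 := hPle (j + (M + 1)) x
          have h5 : (0:ℝ) ≤ ((s (j + (M + 1)))⁻¹) ^ 2 := sq_nonneg _
          have h6 : ‖P (j + (M + 1)) x‖ ^ 2 ≤ ‖x‖ ^ 2 := by
            nlinarith [norm_nonneg (P (j + (M + 1)) x)]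
          nlinarith
        calc ∑ j ∈ t, ‖f j‖ ^ 2
            ≤ ∑ j ∈ t, ((s (M + 1 + j))⁻¹) ^ 2 * ‖x‖ ^ 2 := Finset.sum_le_sum hle
          _ = (∑ j ∈ t, ((s (M + 1 + j))⁻¹) ^ 2) * ‖x‖ ^ 2 := by rw [← Finset.sum_mul]
          _ ≤ C * ‖x‖ ^ 2 := by
              have := Summable.sum_le_tsum t (fun j _ => sq_nonneg ((s (M + 1 + j))⁻¹)) hgsum
              nlinarith [sq_nonneg ‖x‖]
      have hsq : ‖∑ j ∈ t, f j‖ ^ 2 ≤ (Real.sqrt C * ‖x‖) ^ 2 := by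
        rw [hp, mul_pow, Real.sq_sqrt hC0]
        exact hbound
      have h0 : 0 ≤ Real.sqrt C * ‖x‖ := mul_nonneg (Real.sqrt_nonneg _) (norm_nonneg _)
      nlinarith [norm_nonneg (∑ j ∈ t, f j)]
    have hR1 : ‖R ((1 - Q M) x)‖ ≤ Real.sqrt C * ‖x‖ :=
      le_of_tendsto ((continuous_norm.tendsto _).comp h3)
        (Filter.Eventually.of_forall hfin)
    simpa [ContinuousLinearMap.mul_apply] using hR1
  refine ⟨key, ?_⟩
  have h0 : Tendsto (fun M : ℕ => ∑' j : ℕ, ((s (M + 1 + j))⁻¹) ^ 2) atTop (nhds 0) := by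
    have h := tendsto_sum_nat_add (fun l => ((s l)⁻¹) ^ 2)
    have h2 := h.comp (tendsto_add_atTop_nat 1)
    have heq : (fun M : ℕ => ∑' j : ℕ, ((s (M + 1 + j))⁻¹) ^ 2)
        = fun M : ℕ => ∑' k : ℕ, ((s (k + (M + 1)))⁻¹) ^ 2 := by
      funext M
      exact tsum_congr fun j => by rw [add_comm]
    rw [heq]
    exact h2
  have hsq : Tendsto (fun M : ℕ => Real.sqrt (∑' j : ℕ, ((s (M + 1 + j))⁻¹) ^ 2))
      atTop (nhds 0) := by
    have := (Real.continuous_sqrt.tendsto 0).comp h0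
    simpa [Function.comp_def] using this
  exact squeeze_zero (fun M => norm_nonneg _) key hsq
end

section
/- Let (P_l)_{l∈ℕ} be a family of pairwise-orthogonal orthogonal projections on a complex Hilbert space H, let (s_l) be strictly positive real numbers, and let R be a bounded operator on H with R P_l = s_l^{-1} P_l for every l. Set Q_L := Σ_{l=0}^L P_l, S_L := Σ_{l=0}^L s_l P_l, s_L^+ := √(Σ_{l=0}^L s_l²) and s_L^- := √(Σ_{l=0}^L s_l^{-2}). Then for every bounded operator X on H and every L: ‖R (Q_L X Q_L) S_L‖ ≤ s_L^+ s_L^- ‖Q_L X Q_L‖. -/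
open scoped InnerProductSpace

lemma pyth {H : Type*} [NormedAddCommGroup H] [InnerProductSpace ℂ H]
    (t : Finset ℕ) (v : ℕ → H)
    (h : ∀ i ∈ t, ∀ j ∈ t, i ≠ j → ⟪v i, v j⟫_ℂ = 0) :
    ‖∑ i ∈ t, v i‖ ^ 2 = ∑ i ∈ t, ‖v i‖ ^ 2 := by
  have key : ⟪∑ i ∈ t, v i, ∑ j ∈ t, v j⟫_ℂ = ∑ i ∈ t, ⟪v i, v i⟫_ℂ := by
    rw [sum_inner]
    refine Finset.sum_congr rfl fun i hi => ?_
    rw [inner_sum, Finset.sum_eq_single i (fun j hj hne => h i hi j hj (Ne.symm hne)) (fun hni => absurd hi hni)]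
  have h1 := norm_sq_eq_re_inner (𝕜 := ℂ) (∑ i ∈ t, v i)
  rw [h1, key, map_sum]
  exact Finset.sum_congr rfl fun i _ => (norm_sq_eq_re_inner (𝕜 := ℂ) (v i)).symm

lemma proj_contract {H : Type*} [NormedAddCommGroup H] [InnerProductSpace ℂ H] [CompleteSpace H]
    (T : H →L[ℂ] H) (hsa : IsSelfAdjoint T) (hid : T * T = T) (x : H) : ‖T x‖ ≤ ‖x‖ := by
  have hsym := ContinuousLinearMap.isSelfAdjoint_iff_isSymmetric.mp hsa
  have h1 : ‖T x‖ ^ 2 = RCLike.re ⟪T x, T x⟫_ℂ := norm_sq_eq_re_inner (𝕜 := ℂ) (T x)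
  have hTT : T (T x) = T x := by
    have := congrArg (fun A => A x) hid
    simpa [ContinuousLinearMap.mul_apply] using this
  have h2 : ⟪T x, T x⟫_ℂ = ⟪x, T x⟫_ℂ := by
    have h := hsym x (T x)
    simp only [ContinuousLinearMap.coe_coe] at h
    rw [h, hTT]
  have h3 : RCLike.re ⟪x, T x⟫_ℂ ≤ ‖x‖ * ‖T x‖ := re_inner_le_norm (𝕜 := ℂ) x (T x)
  rcases eq_or_lt_of_le (norm_nonneg (T x)) with h0 | h0
  · rw [← h0]; exact norm_nonneg x
  · have : ‖T x‖ ^ 2 ≤ ‖x‖ * ‖T x‖ := by rw [h1, h2]; exact h3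
    nlinarith



/-- (Main estimate of Lemma 3 of the paper.) With `R` realizing
`S^{-1}` and `S_L = Σ_{l≤L} s_l P_l`, for every bounded `X`,
`‖R (Q_L X Q_L) S_L‖ ≤ s_L^+ s_L^- ‖Q_L X Q_L‖`, where
`s_L^+ = √(Σ_{l≤L} s_l²)` and `s_L^- = √(Σ_{l≤L} s_l^{-2})`. -/
theorem stmt_10 {H : Type*} [NormedAddCommGroup H] [InnerProductSpace ℂ H] [CompleteSpace H]
    (P : ℕ → H →L[ℂ] H)
    (hP_sa : ∀ l, IsSelfAdjoint (P l))
    (hP_idem : ∀ l, P l * P l = P l)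
    (hP_orth : ∀ l k, l ≠ k → P l * P k = 0)
    (s : ℕ → ℝ) (hs : ∀ l, 0 < s l)
    (R : H →L[ℂ] H)
    (hR : ∀ l, R * P l = (((s l)⁻¹ : ℝ) : ℂ) • P l)
    (Q SL : ℕ → H →L[ℂ] H)
    (hQ : ∀ L, Q L = ∑ l ∈ Finset.range (L + 1), P l)
    (hSL : ∀ L, SL L = ∑ l ∈ Finset.range (L + 1), (s l : ℂ) • P l)
    (X : H →L[ℂ] H) (L : ℕ) :
    ‖R * (Q L * X * Q L) * SL L‖ ≤
      Real.sqrt (∑ l ∈ Finset.range (L + 1), (s l) ^ 2) *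
        Real.sqrt (∑ l ∈ Finset.range (L + 1), ((s l)⁻¹) ^ 2) * ‖Q L * X * Q L‖ := by
  set t := Finset.range (L + 1) with ht
  set Y := Q L * X * Q L with hY
  set a := ∑ l ∈ t, (s l) ^ 2 with ha
  set b := ∑ l ∈ t, ((s l)⁻¹) ^ 2 with hb
  have ha0 : 0 ≤ a := Finset.sum_nonneg fun l _ => sq_nonneg _
  have hb0 : 0 ≤ b := Finset.sum_nonneg fun l _ => sq_nonneg _
  -- orthogonality of ranges
  have horth : ∀ (u v : H) (i j : ℕ), i ≠ j → ⟪P i u, P j v⟫_ℂ = 0 := by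
    intro u v i j hij
    have hsym := ContinuousLinearMap.isSelfAdjoint_iff_isSymmetric.mp (hP_sa i)
    have h := hsym u (P j v)
    simp only [ContinuousLinearMap.coe_coe] at h
    rw [h]
    have : P i (P j v) = 0 := by
      have := congrArg (fun A => A v) (hP_orth i j hij)
      simpa [ContinuousLinearMap.mul_apply] using this
    rw [this, inner_zero_right]
  have hPQ : ∀ l ∈ t, P l * Q L = P l := by
    intro l hl
    rw [hQ, Finset.mul_sum,
      Finset.sum_eq_single l (fun j hj hne => hP_orth l j (Ne.symm hne)) (fun h => absurd hl h)]
    exact hP_idem l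
  refine ContinuousLinearMap.opNorm_le_bound _
    (by positivity) fun x => ?_
  set w := SL L x with hw
  -- Step 1 : ‖w‖² ≤ a ‖x‖²
  have hw_eq : w = ∑ k ∈ t, (s k : ℂ) • P k x := by
    rw [hw, hSL]; simp [ContinuousLinearMap.sum_apply, ht]
  have hw_sq : ‖w‖ ^ 2 ≤ a * ‖x‖ ^ 2 := by
    rw [hw_eq, pyth t _ (by
      intro i hi j hj hij
      rw [inner_smul_left, inner_smul_right, horth x x i j hij, mul_zero, mul_zero])]
    rw [ha, Finset.sum_mul]
    refine Finset.sum_le_sum fun k hk => ?_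
    have h1 : ‖(s k : ℂ) • P k x‖ = s k * ‖P k x‖ := by
      rw [norm_smul, Complex.norm_real, Real.norm_eq_abs, abs_of_pos (hs k)]
    rw [h1, mul_pow]
    exact mul_le_mul_of_nonneg_left
      (pow_le_pow_left₀ (norm_nonneg _) (proj_contract (P k) (hP_sa k) (hP_idem k) x) 2)
      (sq_nonneg _)
  -- Step 2 : the action of the operator
  have key : (R * Y * SL L) x = ∑ l ∈ t, (((s l)⁻¹ : ℝ) : ℂ) • P l (Y w) := by
    have hz : (R * Y * SL L) x = R (Q L (X (Q L w))) := by
      simp [hY, ContinuousLinearMap.mul_apply, hw]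
    rw [hz]
    have hRQ : R (Q L (X (Q L w))) = ∑ l ∈ t, (((s l)⁻¹ : ℝ) : ℂ) • P l (X (Q L w)) := by
      have : R * Q L = ∑ l ∈ t, (((s l)⁻¹ : ℝ) : ℂ) • P l := by
        rw [hQ, Finset.mul_sum]
        exact Finset.sum_congr rfl fun l _ => hR l
      have := congrArg (fun A => A (X (Q L w))) this
      simpa [ContinuousLinearMap.mul_apply, ContinuousLinearMap.sum_apply] using this
    rw [hRQ]
    refine Finset.sum_congr rfl fun l hl => ?_
    congr 1
    have : Y w = Q L (X (Q L w)) := by simp [hY, ContinuousLinearMap.mul_apply]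
    rw [this]
    have := congrArg (fun A => A (X (Q L w))) (hPQ l hl)
    simpa [ContinuousLinearMap.mul_apply] using this.symm
  -- Step 3 : norm estimate
  have hYw : ‖Y w‖ ≤ ‖Y‖ * ‖w‖ := (Y).le_opNorm w
  have hA_sq : ‖(R * Y * SL L) x‖ ^ 2 ≤ b * ‖Y w‖ ^ 2 := by
    rw [key, pyth t _ (by
      intro i hi j hj hij
      rw [inner_smul_left, inner_smul_right, horth (Y w) (Y w) i j hij, mul_zero, mul_zero])]
    rw [hb, Finset.sum_mul]
    refine Finset.sum_le_sum fun l hl => ?_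
    have h1 : ‖(((s l)⁻¹ : ℝ) : ℂ) • P l (Y w)‖ = (s l)⁻¹ * ‖P l (Y w)‖ := by
      rw [norm_smul, Complex.norm_real, Real.norm_eq_abs, abs_of_pos (inv_pos.mpr (hs l))]
    rw [h1, mul_pow]
    exact mul_le_mul_of_nonneg_left
      (pow_le_pow_left₀ (norm_nonneg _) (proj_contract (P l) (hP_sa l) (hP_idem l) (Y w)) 2)
      (sq_nonneg _)
  -- combine
  have hfinal_sq : ‖(R * Y * SL L) x‖ ^ 2 ≤ (Real.sqrt a * Real.sqrt b * ‖Y‖ * ‖x‖) ^ 2 := by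
    have hr : (Real.sqrt a * Real.sqrt b * ‖Y‖ * ‖x‖) ^ 2 = a * b * ‖Y‖ ^ 2 * ‖x‖ ^ 2 := by
      rw [mul_pow, mul_pow, mul_pow, Real.sq_sqrt ha0, Real.sq_sqrt hb0]
    rw [hr]
    calc ‖(R * Y * SL L) x‖ ^ 2 ≤ b * ‖Y w‖ ^ 2 := hA_sq
      _ ≤ b * (‖Y‖ ^ 2 * ‖w‖ ^ 2) := by
          rw [← mul_pow]
          exact mul_le_mul_of_nonneg_left (pow_le_pow_left₀ (norm_nonneg _) hYw 2) hb0
      _ ≤ b * (‖Y‖ ^ 2 * (a * ‖x‖ ^ 2)) := by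
          refine mul_le_mul_of_nonneg_left (mul_le_mul_of_nonneg_left hw_sq (sq_nonneg _)) hb0
      _ = a * b * ‖Y‖ ^ 2 * ‖x‖ ^ 2 := by ring
  have := (pow_le_pow_iff_left₀ (norm_nonneg _) (by positivity) (two_ne_zero)).mp hfinal_sq
  linarith
end

section
/- Let (P_l)_{l∈ℕ} be a family of pairwise-orthogonal orthogonal projections on a complex Hilbert space H, let (s_l) be strictly positive real numbers, and let R be a bounded operator on H with R P_l = s_l^{-1} P_l for every l. Set Q_L := Σ_{l=0}^L P_l, S_L := Σ_{l=0}^L s_l P_l, s_L^+ := √(Σ_{l=0}^L s_l²) and s_L^- := √(Σ_{l=0}^L s_l^{-2}). For a bounded operator X define recursively Y_0 := Q_L X Q_L and Y_{n+1} := R Y_n S_L. Then for every n ≥ 0: (i) Y_n = Q_L Y_n Q_L, and (ii) ‖Y_n‖ ≤ (s_L^+ s_L^-)^n ‖Q_L X Q_L‖. -/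
open scoped ComplexOrder

section aux
variable {H : Type*} [NormedAddCommGroup H] [InnerProductSpace ℂ H] [CompleteSpace H]

lemma sa_inner {A : H →L[ℂ] H} (hA : IsSelfAdjoint A) (x y : H) :
    (inner ℂ (A x) y : ℂ) = inner ℂ x (A y) := by
  rw [← ContinuousLinearMap.adjoint_inner_left,
    ContinuousLinearMap.isSelfAdjoint_iff'.mp hA]

lemma proj_apply_norm_le {A : H →L[ℂ] H} (hA : IsSelfAdjoint A) (hA2 : A * A = A) (x : H) :
    ‖A x‖ ≤ ‖x‖ := by
  have h1 : ‖A x‖ ^ 2 = RCLike.re (K := ℂ) (inner ℂ (A x) (A x)) := by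
    rw [← inner_self_eq_norm_sq (𝕜 := ℂ)]
  have h2 : (inner ℂ (A x) (A x) : ℂ) = inner ℂ x (A x) := by
    rw [sa_inner hA]
    congr 1
    have := congrArg (fun T : H →L[ℂ] H => T x) hA2
    simpa using this
  have h3 : RCLike.re (K := ℂ) (inner ℂ x (A x) : ℂ) ≤ ‖x‖ * ‖A x‖ := by
    calc RCLike.re (K := ℂ) (inner ℂ x (A x) : ℂ) ≤ ‖(inner ℂ x (A x) : ℂ)‖ := RCLike.re_le_norm _
      _ ≤ ‖x‖ * ‖A x‖ := norm_inner_le_norm _ _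
  have h4 : ‖A x‖ ^ 2 ≤ ‖x‖ * ‖A x‖ := by rw [h1, h2]; exact h3
  nlinarith [norm_nonneg (A x), norm_nonneg x]

lemma diag_mul (P : ℕ → H →L[ℂ] H)
    (hP_idem : ∀ l, P l * P l = P l)
    (hP_orth : ∀ l k, l ≠ k → P l * P k = 0)
    (f g : ℕ → ℂ) (F : Finset ℕ) :
    (∑ l ∈ F, f l • P l) * (∑ k ∈ F, g k • P k) = ∑ l ∈ F, (f l * g l) • P l := by
  rw [Finset.sum_mul_sum]
  refine Finset.sum_congr rfl fun l hl => ?_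
  rw [Finset.sum_eq_single_of_mem l hl]
  · rw [smul_mul_assoc, mul_smul_comm, hP_idem l, smul_smul]
  · intro k _ hk
    rw [smul_mul_assoc, mul_smul_comm, hP_orth l k (Ne.symm hk), smul_zero, smul_zero]

lemma norm_diag_le (P : ℕ → H →L[ℂ] H)
    (hP_sa : ∀ l, IsSelfAdjoint (P l))
    (hP_idem : ∀ l, P l * P l = P l)
    (hP_orth : ∀ l k, l ≠ k → P l * P k = 0)
    (c : ℕ → ℝ) (F : Finset ℕ) :
    ‖∑ l ∈ F, ((c l : ℝ) : ℂ) • P l‖ ≤ Real.sqrt (∑ l ∈ F, (c l) ^ 2) := by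
  refine ContinuousLinearMap.opNorm_le_bound _ (Real.sqrt_nonneg _) fun x => ?_
  set v : ℕ → H := fun l => ((c l : ℝ) : ℂ) • P l x with hv
  have happ : (∑ l ∈ F, ((c l : ℝ) : ℂ) • P l) x = ∑ l ∈ F, v l := by
    simp [hv, ContinuousLinearMap.sum_apply]
  rw [happ]
  have horth : ∀ l ∈ F, ∀ k ∈ F, k ≠ l → (inner ℂ (v l) (v k) : ℂ) = 0 := by
    intro l _ k _ hk
    simp only [hv, inner_smul_left, inner_smul_right]
    have : (inner ℂ (P l x) (P k x) : ℂ) = 0 := by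
      rw [sa_inner (hP_sa l)]
      have : P l (P k x) = 0 := by
        have := congrArg (fun T : H →L[ℂ] H => T x) (hP_orth l k (Ne.symm hk))
        simpa using this
      rw [this, inner_zero_right]
    rw [this, mul_zero, mul_zero]
  have hsq : ‖∑ l ∈ F, v l‖ ^ 2 = ∑ l ∈ F, ‖v l‖ ^ 2 := by
    have h1 : (inner ℂ (∑ l ∈ F, v l) (∑ k ∈ F, v k) : ℂ)
        = ∑ l ∈ F, (inner ℂ (v l) (v l) : ℂ) := by
      rw [sum_inner]
      refine Finset.sum_congr rfl fun l hl => ?_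
      rw [inner_sum, Finset.sum_eq_single_of_mem l hl]
      intro k hkF hk
      exact horth l hl k hkF hk
    have h2 : ‖∑ l ∈ F, v l‖ ^ 2 = RCLike.re (K := ℂ) (inner ℂ (∑ l ∈ F, v l) (∑ l ∈ F, v l) : ℂ) := by
      rw [← inner_self_eq_norm_sq (𝕜 := ℂ)]
    rw [h2, h1, map_sum]
    refine Finset.sum_congr rfl fun l _ => ?_
    rw [inner_self_eq_norm_sq (𝕜 := ℂ)]
  have hbound : ‖∑ l ∈ F, v l‖ ^ 2 ≤ (∑ l ∈ F, (c l) ^ 2) * ‖x‖ ^ 2 := by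
    rw [hsq, Finset.sum_mul]
    refine Finset.sum_le_sum fun l _ => ?_
    have : ‖v l‖ = |c l| * ‖P l x‖ := by
      simp [hv, norm_smul, Complex.norm_real]
    rw [this, mul_pow, sq_abs]
    have h := proj_apply_norm_le (hP_sa l) (hP_idem l) x
    have h0 : (0:ℝ) ≤ ‖P l x‖ := norm_nonneg _
    have hp : ‖P l x‖ ^ 2 ≤ ‖x‖ ^ 2 := by nlinarith
    exact mul_le_mul_of_nonneg_left hp (sq_nonneg _)
  have hnn : (0:ℝ) ≤ ‖∑ l ∈ F, v l‖ := norm_nonneg _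
  have := Real.sqrt_le_sqrt hbound
  rw [Real.sqrt_sq hnn, Real.sqrt_mul (by positivity), Real.sqrt_sq (norm_nonneg x)] at this
  exact this

end aux

/-- (Lemma 3 of the paper, parts (i) and (iii).) The iterates
`Y_0 = Q_L X Q_L`, `Y_{n+1} = R Y_n S_L` (realizing `T_S^n(X_L) = S^{-n} X_L S^n`)
satisfy `Y_n = Q_L Y_n Q_L` and `‖Y_n‖ ≤ (s_L^+ s_L^-)^n ‖Q_L X Q_L‖`. -/
theorem stmt_11 {H : Type*} [NormedAddCommGroup H] [InnerProductSpace ℂ H] [CompleteSpace H]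
    (P : ℕ → H →L[ℂ] H)
    (hP_sa : ∀ l, IsSelfAdjoint (P l))
    (hP_idem : ∀ l, P l * P l = P l)
    (hP_orth : ∀ l k, l ≠ k → P l * P k = 0)
    (s : ℕ → ℝ) (hs : ∀ l, 0 < s l)
    (R : H →L[ℂ] H)
    (hR : ∀ l, R * P l = (((s l)⁻¹ : ℝ) : ℂ) • P l)
    (Q SL : ℕ → H →L[ℂ] H)
    (hQ : ∀ L, Q L = ∑ l ∈ Finset.range (L + 1), P l)
    (hSL : ∀ L, SL L = ∑ l ∈ Finset.range (L + 1), (s l : ℂ) • P l)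
    (X : H →L[ℂ] H) (L : ℕ)
    (Y : ℕ → H →L[ℂ] H)
    (hY0 : Y 0 = Q L * X * Q L)
    (hYrec : ∀ n, Y (n + 1) = R * Y n * SL L) :
    ∀ n : ℕ,
      Y n = Q L * Y n * Q L ∧
      ‖Y n‖ ≤ (Real.sqrt (∑ l ∈ Finset.range (L + 1), (s l) ^ 2) *
          Real.sqrt (∑ l ∈ Finset.range (L + 1), ((s l)⁻¹) ^ 2)) ^ n * ‖Q L * X * Q L‖ := by
  set F := Finset.range (L + 1) with hF
  set a := Real.sqrt (∑ l ∈ F, (s l) ^ 2) with ha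
  set b := Real.sqrt (∑ l ∈ F, ((s l)⁻¹) ^ 2) with hb
  have hQ1 : Q L = ∑ l ∈ F, (1 : ℂ) • P l := by rw [hQ]; simp [hF]
  -- basic algebra
  have hQQ : Q L * Q L = Q L := by
    rw [hQ1, diag_mul P hP_idem hP_orth]; simp
  have hSQ : SL L * Q L = SL L := by
    rw [hSL, hQ1, diag_mul P hP_idem hP_orth]; simp [hSL]
  have hQS : Q L * SL L = SL L := by
    rw [hSL, hQ1, diag_mul P hP_idem hP_orth]; simp [hSL, hF]
  have hRQ : R * Q L = ∑ l ∈ F, (((s l)⁻¹ : ℝ) : ℂ) • P l := by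
    rw [hQ, Finset.mul_sum]
    exact Finset.sum_congr rfl fun l _ => hR l
  have hQRQ : Q L * (R * Q L) = R * Q L := by
    rw [hRQ, hQ1, diag_mul P hP_idem hP_orth]; simp [hRQ]
  -- norm bounds
  have hnSL : ‖SL L‖ ≤ a := by
    rw [hSL]; exact norm_diag_le P hP_sa hP_idem hP_orth s F
  have hnRQ : ‖R * Q L‖ ≤ b := by
    rw [hRQ]; exact norm_diag_le P hP_sa hP_idem hP_orth (fun l => (s l)⁻¹) F
  have hC : (0:ℝ) ≤ ‖Q L * X * Q L‖ := norm_nonneg _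
  intro n
  induction n with
  | zero =>
    constructor
    · rw [hY0]
      calc Q L * X * Q L = Q L * Q L * X * (Q L * Q L) := by rw [hQQ]
        _ = Q L * (Q L * X * Q L) * Q L := by noncomm_ring
    · rw [hY0]; simp
  | succ n ih =>
    obtain ⟨ihInv, ihNorm⟩ := ih
    have key : Y (n + 1) = (R * Q L) * Y n * SL L := by
      rw [hYrec n]
      conv_lhs => rw [ihInv]
      calc R * (Q L * Y n * Q L) * SL L
          = (R * Q L) * (Y n * (Q L * SL L)) := by noncomm_ring
        _ = (R * Q L) * (Y n * SL L) := by rw [hQS]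
        _ = (R * Q L) * Y n * SL L := by noncomm_ring
    constructor
    · rw [key]
      calc (R * Q L) * Y n * SL L
          = (Q L * (R * Q L)) * Y n * (SL L * Q L) := by rw [hQRQ, hSQ]
        _ = Q L * ((R * Q L) * Y n * SL L) * Q L := by noncomm_ring
    · rw [key]
      have h1 : ‖(R * Q L) * Y n * SL L‖ ≤ ‖R * Q L‖ * ‖Y n‖ * ‖SL L‖ :=
        le_trans (norm_mul_le _ _) (by
          gcongr
          exact norm_mul_le _ _)
      have hb0 : (0:ℝ) ≤ b := Real.sqrt_nonneg _
      have ha0 : (0:ℝ) ≤ a := Real.sqrt_nonneg _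
      have h2 : ‖R * Q L‖ * ‖Y n‖ * ‖SL L‖ ≤ b * ((a * b) ^ n * ‖Q L * X * Q L‖) * a :=
        mul_le_mul (mul_le_mul hnRQ ihNorm (norm_nonneg _) hb0) hnSL (norm_nonneg _)
          (by positivity)
      calc ‖(R * Q L) * Y n * SL L‖ ≤ b * ((a * b) ^ n * ‖Q L * X * Q L‖) * a := le_trans h1 h2
        _ = (a * b) ^ (n + 1) * ‖Q L * X * Q L‖ := by ring
end

section
/- Let R be a bounded, injective, self-adjoint operator on a complex Hilbert space H. Suppose that for every α > 0 there exists β > 0 with the property: for all bounded operators X, Y on H satisfying Y R = R X and ‖Y‖ ≤ α ‖X‖, there exists a bounded operator Z with Z R = R Y and ‖Z‖ ≤ β ‖Y‖. Let n ≥ 1 be an integer and (X_j)_{j∈ℕ} a sequence of bounded operators such that, for some α > 0 and every j, there exists a bounded Y_j with Y_j R = R (R^n X_j) and ‖Y_j‖ ≤ α ‖R^n X_j‖, and such that ‖R^n X_j‖ → 0 as j → ∞. Then for every k ≥ 0 and every sequence (Z_j) of bounded operators satisfying Z_j R^k = R^{n+k} X_j for all j, one has ‖Z_j‖ → 0 as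 j → ∞. -/
open Filter
open scoped InnerProductSpace

/-- (Proposition 4 of the paper.) Suppose `T_S` maps each
`𝔄_S^{(α)}` into some `𝔄_S^{(β)}` (relations `Y R = R X` encode `Y = S^{-1} X S`
with `S = R^{-1}`). If `S^{-n} X_j ∈ 𝔄_S^{(α)}` for all `j` and
`‖S^{-n} X_j‖ → 0`, then `‖S^{-n-k} X_j S^k‖ → 0` for every `k ≥ 0`, where
`Z_j = S^{-n-k} X_j S^k` is encoded by `Z_j R^k = R^{n+k} X_j`. -/
theorem stmt_13 {H : Type*} [NormedAddCommGroup H] [InnerProductSpace ℂ H] [CompleteSpace H]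
    (R : H →L[ℂ] H) (hR_inj : Function.Injective R) (hR_sa : IsSelfAdjoint R)
    (hyp : ∀ α : ℝ, 0 < α → ∃ β : ℝ, 0 < β ∧
      ∀ X Y : H →L[ℂ] H, Y * R = R * X → ‖Y‖ ≤ α * ‖X‖ →
        ∃ Z : H →L[ℂ] H, Z * R = R * Y ∧ ‖Z‖ ≤ β * ‖Y‖)
    (n : ℕ) (hn : 1 ≤ n)
    (X : ℕ → H →L[ℂ] H)
    (α : ℝ) (hα : 0 < α)
    (hXα : ∀ j, ∃ Y : H →L[ℂ] H,
      Y * R = R * (R ^ n * X j) ∧ ‖Y‖ ≤ α * ‖R ^ n * X j‖)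
    (hX0 : Tendsto (fun j => ‖R ^ n * X j‖) atTop (nhds 0)) :
    ∀ k : ℕ, ∀ Z : ℕ → H →L[ℂ] H,
      (∀ j, Z j * R ^ k = R ^ (n + k) * X j) →
      Tendsto (fun j => ‖Z j‖) atTop (nhds 0) := by
  -- R has dense range
  have hdR : DenseRange (⇑R) := by
    have hclos : (LinearMap.range (R : H →ₗ[ℂ] H)).topologicalClosure = ⊤ := by
      rw [Submodule.topologicalClosure_eq_top_iff, Submodule.eq_bot_iff]
      intro x hx
      rw [Submodule.mem_orthogonal] at hx
      have hRx : R x = 0 := by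
        have h1 : (⟪(R (R x) : H), x⟫_ℂ) = 0 := hx (R (R x)) ⟨R x, rfl⟩
        have hsym := ContinuousLinearMap.isSelfAdjoint_iff_isSymmetric.mp hR_sa
        have h2 : (⟪(R (R x) : H), x⟫_ℂ) = ⟪(R x : H), R x⟫_ℂ := hsym (R x) x
        rw [h2] at h1
        exact inner_self_eq_zero.mp h1
      exact hR_inj (by simpa using hRx)
    have : Dense ((LinearMap.range (R : H →ₗ[ℂ] H) : Submodule ℂ H) : Set H) :=
      Submodule.dense_iff_topologicalClosure_eq_top.mpr hclos
    simpa [LinearMap.coe_range, DenseRange] using this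
  -- powers of R have dense range
  have hdpow : ∀ k : ℕ, DenseRange (⇑(R ^ k)) := by
    intro k
    induction k with
    | zero => simpa [pow_zero] using denseRange_id
    | succ m ih =>
        have hco : ⇑(R ^ (m + 1)) = ⇑R ∘ ⇑(R ^ m) := by
          funext x; simp [pow_succ', ContinuousLinearMap.mul_apply]
        rw [hco]
        exact hdR.comp ih R.continuous
  -- main inductive claim
  have claim : ∀ m : ℕ, ∃ c : ℝ, 0 < c ∧ ∀ j, ∃ W P : H →L[ℂ] H,
      W * R = R * P ∧ ‖W‖ ≤ c * ‖P‖ ∧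
      W * R ^ (m + 1) = R ^ (m + 1) * (R ^ n * X j) ∧ ‖W‖ ≤ c * ‖R ^ n * X j‖ := by
    intro m
    induction m with
    | zero =>
        refine ⟨α, hα, fun j => ?_⟩
        obtain ⟨Y, hY1, hY2⟩ := hXα j
        exact ⟨Y, R ^ n * X j, hY1, hY2, by simpa [pow_one] using hY1, hY2⟩
    | succ m ih =>
        obtain ⟨c, hc, h⟩ := ih
        obtain ⟨β, hβ, hstep⟩ := hyp c hc
        refine ⟨β * max c 1, by positivity, fun j => ?_⟩
        obtain ⟨W, P, h1, h2, h3, h4⟩ := h j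
        obtain ⟨Zs, hZ1, hZ2⟩ := hstep P W h1 h2
        refine ⟨Zs, W, hZ1, ?_, ?_, ?_⟩
        · calc ‖Zs‖ ≤ β * ‖W‖ := hZ2
            _ ≤ β * max c 1 * ‖W‖ := by
                nlinarith [mul_nonneg (mul_nonneg hβ.le (norm_nonneg W)) (sub_nonneg.mpr (le_max_right c 1))]
        · rw [pow_succ' R (m + 1), ← mul_assoc, hZ1, mul_assoc, h3, ← mul_assoc]
        · calc ‖Zs‖ ≤ β * ‖W‖ := hZ2
            _ ≤ β * (c * ‖R ^ n * X j‖) := by nlinarith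
            _ ≤ β * max c 1 * ‖R ^ n * X j‖ := by
                nlinarith [mul_nonneg (mul_nonneg hβ.le (norm_nonneg (R ^ n * X j))) (sub_nonneg.mpr (le_max_left c 1))]
  intro k Z hZ
  match k with
  | 0 =>
      have hzz : ∀ j, Z j = R ^ n * X j := by
        intro j
        have := hZ j
        simpa using this
      exact hX0.congr fun j => by rw [hzz j]
  | (m + 1) =>
      obtain ⟨c, hc, h⟩ := claim m
      have hb : ∀ j, ‖Z j‖ ≤ c * ‖R ^ n * X j‖ := by
        intro j
        obtain ⟨W, P, h1, h2, h3, h4⟩ := h j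
        have heq : Z j * R ^ (m + 1) = W * R ^ (m + 1) := by
          rw [hZ j, h3, ← mul_assoc, ← pow_add, add_comm (m + 1) n]
        have hfun : ⇑(Z j) ∘ ⇑(R ^ (m + 1)) = ⇑W ∘ ⇑(R ^ (m + 1)) := by
          funext x
          simpa [ContinuousLinearMap.mul_apply] using
            congrArg (fun T : H →L[ℂ] H => T x) heq
        have heqfun := (hdpow (m + 1)).equalizer (Z j).continuous W.continuous hfun
        have : Z j = W := ContinuousLinearMap.ext fun x => congrFun heqfun x
        rw [this]; exact h4
      exact squeeze_zero (fun j => norm_nonneg _) hb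
        (by simpa using hX0.const_mul c)
end

section
/- Let A and B be bounded operators on a complex Hilbert space H and let t ∈ ℝ. Then exp(i t A) − exp(i t B) = i ∫₀ᵗ exp(i A (t − s)) (A − B) exp(i B s) ds, where the integral is the Bochner integral of the continuous function s ↦ exp(i A (t − s)) (A − B) exp(i B s) with values in the Banach space of bounded operators on H. -/
open NormedSpace

private lemma smul_rw {H : Type*} [NormedAddCommGroup H] [InnerProductSpace ℂ H]
    (X : H →L[ℂ] H) (c : ℂ) :
    (Complex.I * c) • X = c • (Complex.I • X) := by
  rw [mul_comm, mul_smul]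

private lemma hasDerivAt_exp_ofReal {H : Type*} [NormedAddCommGroup H] [InnerProductSpace ℂ H]
    [CompleteSpace H] (X : H →L[ℂ] H) (s : ℝ) :
    HasDerivAt (fun s : ℝ => exp ((s : ℂ) • X)) (exp ((s : ℂ) • X) * X) s := by
  have h := hasDerivAt_exp_smul_const X (s : ℂ)
  have h2 : HasDerivAt (fun y : ℝ => (y : ℂ)) 1 s := Complex.ofRealCLM.hasDerivAt
  have h3 := h.scomp s h2
  simp at h3
  exact h3

/-- (Equation (45) of the paper, Duhamel formula.) For bounded
operators `A`, `B` and `t ∈ ℝ`,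
`exp(i t A) − exp(i t B) = i ∫₀ᵗ exp(i A (t − s)) (A − B) exp(i B s) ds`. -/
theorem stmt_14 {H : Type*} [NormedAddCommGroup H] [InnerProductSpace ℂ H] [CompleteSpace H]
    (A B : H →L[ℂ] H) (t : ℝ) :
    exp ((Complex.I * t) • A) - exp ((Complex.I * t) • B) =
      Complex.I • ∫ s in (0 : ℝ)..t,
        exp ((Complex.I * (t - s)) • A) * (A - B) * exp ((Complex.I * s) • B) := by
  set M : H →L[ℂ] H := Complex.I • A with hM
  set N : H →L[ℂ] H := Complex.I • B with hN
  -- derivative of s ↦ exp((↑(t-s)) • M)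
  have hderiv2 : ∀ s : ℝ,
      HasDerivAt (fun s : ℝ => exp (((t - s : ℝ) : ℂ) • M))
        (-(exp (((t - s : ℝ) : ℂ) • M) * M)) s := by
    intro s
    have hinner : HasDerivAt (fun x : ℝ => t - x) (-1 : ℝ) s := by
      simpa using (hasDerivAt_id s).const_sub t
    have h1 := (hasDerivAt_exp_ofReal M (t - s)).scomp s hinner
    have h2 : HasDerivAt (fun s : ℝ => exp (((t - s : ℝ) : ℂ) • M))
        ((-1 : ℝ) • (exp (((t - s : ℝ) : ℂ) • M) * M)) s := h1
    simpa using h2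
  set g : ℝ → (H →L[ℂ] H) := fun s => exp (((t - s : ℝ) : ℂ) • M) * exp ((s : ℂ) • N)
    with hg
  have hg' : ∀ s : ℝ,
      HasDerivAt g (exp (((t - s : ℝ) : ℂ) • M) * (N - M) * exp ((s : ℂ) • N)) s := by
    intro s
    have h := (hderiv2 s).mul (hasDerivAt_exp_ofReal N s)
    have hcomm : exp ((s : ℂ) • N) * N = N * exp ((s : ℂ) • N) :=
      ((Commute.refl N).smul_left (s : ℂ)).exp_left
    refine h.congr_deriv ?_
    rw [mul_sub, sub_mul, mul_assoc (exp (((t - s : ℝ) : ℂ) • M)) N, ← hcomm, neg_mul,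
      ← mul_assoc]
    abel
  have hcont : Continuous fun s : ℝ =>
      exp (((t - s : ℝ) : ℂ) • M) * (N - M) * exp ((s : ℂ) • N) := by
    have c1 : Continuous fun s : ℝ => ((t - s : ℝ) : ℂ) • M :=
      (Complex.continuous_ofReal.comp (continuous_const.sub continuous_id)).smul continuous_const
    have c2 : Continuous fun s : ℝ => ((s : ℝ) : ℂ) • N :=
      Complex.continuous_ofReal.smul continuous_const
    exact ((continuous_iff_continuousAt.2 fun s => (hderiv2 s).continuousAt).mul continuous_const).mul
      (continuous_iff_continuousAt.2 fun s => (hasDerivAt_exp_ofReal N s).continuousAt)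
  have key := intervalIntegral.integral_eq_sub_of_hasDerivAt (fun s _ => hg' s)
    (hcont.intervalIntegrable 0 t)
  have hg0 : g 0 = exp ((t : ℂ) • M) := by
    simp [hg, exp_zero]
  have hgt : g t = exp ((t : ℂ) • N) := by
    simp [hg, exp_zero]
  rw [hg0, hgt] at key
  have hNM : N - M = (-Complex.I) • (A - B) := by
    rw [hM, hN]
    module
  have key2 : exp ((t : ℂ) • N) - exp ((t : ℂ) • M)
      = (-Complex.I) • ∫ s in (0 : ℝ)..t,
          exp (((t - s : ℝ) : ℂ) • M) * (A - B) * exp ((s : ℂ) • N) := by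
    rw [← intervalIntegral.integral_smul, ← key]
    congr 1
    funext s
    rw [hNM, mul_smul_comm, smul_mul_assoc]
  have hrw : ∀ s : ℝ,
      exp ((Complex.I * ((t : ℂ) - (s : ℂ))) • A) * (A - B) * exp ((Complex.I * s) • B)
        = exp (((t - s : ℝ) : ℂ) • M) * (A - B) * exp ((s : ℂ) • N) := by
    intro s
    rw [smul_rw A, smul_rw B, ← hM, ← hN, Complex.ofReal_sub]
  calc exp ((Complex.I * t) • A) - exp ((Complex.I * t) • B)
      = exp ((t : ℂ) • M) - exp ((t : ℂ) • N) := by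
        rw [smul_rw A, smul_rw B, ← hM, ← hN]
    _ = -(exp ((t : ℂ) • N) - exp ((t : ℂ) • M)) := by abel
    _ = Complex.I • ∫ s in (0 : ℝ)..t,
        exp (((t - s : ℝ) : ℂ) • M) * (A - B) * exp ((s : ℂ) • N) := by
        rw [key2, neg_smul, neg_neg]
    _ = Complex.I • ∫ s in (0 : ℝ)..t,
        exp ((Complex.I * (t - s)) • A) * (A - B) * exp ((Complex.I * s) • B) := by
        simp only [hrw]
end

section
/- Let (H_L)_{L∈ℕ} be a sequence of bounded self-adjoint operators on a complex Hilbert space H and let R be a bounded operator on H with R H_L = H_L R for every L. Suppose that ‖R (H_L − H_M)‖ → 0 as L, M → ∞ (for every ε > 0 there is N with ‖R(H_L − H_M)‖ < ε for all L, M ≥ N). Then for every t ∈ ℝ, ‖R (exp(i t H_L) − exp(i t H_M))‖ → 0 as L, M → ∞. -/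
open NormedSpace

section Aux
open Complex

variable {H : Type*} [NormedAddCommGroup H] [InnerProductSpace ℂ H] [CompleteSpace H]

lemma exp_mem_unitary' {A : H →L[ℂ] H} (hA : IsSelfAdjoint A) (c : ℂ) (hc : starRingEnd ℂ c = -c) :
    exp (c • A) ∈ unitary (H →L[ℂ] H) := by
  let +nondep : NormedAlgebra ℚ (H →L[ℂ] H) := .restrictScalars ℚ ℂ _
  apply exp_mem_unitary_of_mem_skewAdjoint
  rw [skewAdjoint.mem_iff, star_smul, hA.star_eq, show star c = -c from hc, neg_smul]

set_option maxHeartbeats 2000000 in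
lemma key_estimate {A B R : H →L[ℂ] H} (hA : IsSelfAdjoint A) (hB : IsSelfAdjoint B)
    (hRA : R * A = A * R) (t : ℝ) :
    ‖R * (exp ((Complex.I * t) • A) - exp ((Complex.I * t) • B))‖ ≤ |t| * ‖R * (A - B)‖ := by
  let +nondep : NormedAlgebra ℚ (H →L[ℂ] H) := .restrictScalars ℚ ℂ _
  set E₁ : ℝ → (H →L[ℂ] H) := fun s => exp (((-Complex.I) * s) • A) with hE₁def
  set E₂ : ℝ → (H →L[ℂ] H) := fun s => exp ((Complex.I * s) • B) with hE₂def
  set g : ℝ → (H →L[ℂ] H) := fun s => R * (E₁ s * E₂ s) with hgdef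
  have hE₁mem : ∀ s : ℝ, E₁ s ∈ unitary (H →L[ℂ] H) := fun s =>
    exp_mem_unitary' hA _ (by simp [mul_comm])
  have hE₂mem : ∀ s : ℝ, E₂ s ∈ unitary (H →L[ℂ] H) := fun s =>
    exp_mem_unitary' hB _ (by simp [mul_comm])
  have hcB : ∀ c : ℂ, Commute B (exp (c • B)) :=
    fun c => (((Commute.refl B).smul_right c)).exp_right
  have hRE₁ : ∀ s : ℝ, Commute R (E₁ s) :=
    fun s => (Commute.smul_right (hRA : Commute R A) _).exp_right
  have hReA : Commute R (exp ((Complex.I * t) • A)) :=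
    (Commute.smul_right (hRA : Commute R A) _).exp_right
  have hscal₁ : ∀ s : ℝ, HasDerivAt (fun s : ℝ => (-Complex.I) * (s : ℂ)) (-Complex.I) s := by
    intro s
    simpa using (Complex.ofRealCLM.hasDerivAt (x := s)).const_mul (-Complex.I)
  have hscal₂ : ∀ s : ℝ, HasDerivAt (fun s : ℝ => Complex.I * (s : ℂ)) Complex.I s := by
    intro s
    simpa using (Complex.ofRealCLM.hasDerivAt (x := s)).const_mul Complex.I
  have hdE₁ : ∀ s : ℝ, HasDerivAt E₁ ((-Complex.I) • (E₁ s * A)) s := fun s =>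
    HasDerivAt.scomp s (hasDerivAt_exp_smul_const (𝕂 := ℂ) A _) (hscal₁ s)
  have hdE₂ : ∀ s : ℝ, HasDerivAt E₂ (Complex.I • (E₂ s * B)) s := fun s =>
    HasDerivAt.scomp s (hasDerivAt_exp_smul_const (𝕂 := ℂ) B _) (hscal₂ s)
  set D : ℝ → (H →L[ℂ] H) := fun s => Complex.I • (E₁ s * (R * (B - A) * E₂ s)) with hDdef
  have hdg : ∀ s : ℝ, HasDerivAt g (D s) s := by
    intro s
    have h := ((hdE₁ s).mul (hdE₂ s)).const_mul R
    refine h.congr_deriv ?_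
    have h2 : E₂ s * B = B * E₂ s := (hcB _).eq.symm
    have h3 : R * E₁ s = E₁ s * R := (hRE₁ s).eq
    have hre : ∀ X : H →L[ℂ] H, R * (E₁ s * X) = E₁ s * (R * X) := fun X => by
      rw [← mul_assoc, h3, mul_assoc]
    simp only [hDdef, mul_sub, sub_mul, mul_add, add_mul, mul_neg, neg_mul, smul_sub,
      neg_smul, mul_smul_comm, smul_mul_assoc, mul_assoc, hre, h2]
    abel
  have hbound : ∀ s : ℝ, ‖D s‖ ≤ ‖R * (A - B)‖ := by
    intro s
    rw [hDdef]
    simp only [norm_smul, Complex.norm_I, one_mul]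
    rw [CStarRing.norm_mem_unitary_mul (R * (B - A) * E₂ s) (hE₁mem s), CStarRing.norm_mul_mem_unitary (R * (B - A)) (hE₂mem s),
      show B - A = -(A - B) from (neg_sub _ _).symm, mul_neg, norm_neg]
  have hmvt : ‖g t - g 0‖ ≤ ‖R * (A - B)‖ * ‖t - (0 : ℝ)‖ :=
    Convex.norm_image_sub_le_of_norm_hasDerivWithin_le
      (fun x _ => (hdg x).hasDerivWithinAt) (fun x _ => hbound x) convex_univ
      (Set.mem_univ 0) (Set.mem_univ t)
  have hg0 : g 0 = R := by
    simp [hgdef, hE₁def, hE₂def, NormedSpace.exp_zero]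
  have heA : exp ((Complex.I * t) • A) * E₁ t = 1 := by
    rw [hE₁def, ← exp_add_of_commute (((Commute.refl A).smul_left _).smul_right _),
      ← add_smul, show Complex.I * t + (-Complex.I) * t = 0 by ring, zero_smul, NormedSpace.exp_zero]
  have hfactor : R * (exp ((Complex.I * t) • A) - exp ((Complex.I * t) • B))
      = exp ((Complex.I * t) • A) * (g 0 - g t) := by
    rw [hg0, mul_sub, mul_sub, hReA.eq]
    congr 1
    symm
    calc exp ((Complex.I * t) • A) * g t
        = (exp ((Complex.I * t) • A) * R) * (E₁ t * E₂ t) := by rw [hgdef, mul_assoc]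
      _ = (R * exp ((Complex.I * t) • A)) * (E₁ t * E₂ t) := by rw [hReA.eq]
      _ = R * ((exp ((Complex.I * t) • A) * E₁ t) * E₂ t) := by
          rw [mul_assoc, mul_assoc]
      _ = R * exp ((Complex.I * t) • B) := by rw [heA, one_mul]
  have heAu : exp ((Complex.I * t) • A) ∈ unitary (H →L[ℂ] H) :=
    exp_mem_unitary' hA _ (by simp [mul_comm])
  rw [hfactor, CStarRing.norm_mem_unitary_mul _ heAu, norm_sub_rev]
  calc ‖g t - g 0‖ ≤ ‖R * (A - B)‖ * ‖t - (0 : ℝ)‖ := hmvt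
    _ = |t| * ‖R * (A - B)‖ := by rw [sub_zero, Real.norm_eq_abs, mul_comm]


end Aux

/-- (Condition (1) of Proposition 6 of the paper.) If the
bounded self-adjoint operators `H_L` all commute with `R` and
`‖R (H_L − H_M)‖ → 0` as `L, M → ∞`, then for every `t ∈ ℝ`,
`‖R (exp(i t H_L) − exp(i t H_M))‖ → 0` as `L, M → ∞`. -/
theorem stmt_16 {H : Type*} [NormedAddCommGroup H] [InnerProductSpace ℂ H] [CompleteSpace H]
    (HL : ℕ → H →L[ℂ] H) (hsa : ∀ L, IsSelfAdjoint (HL L))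
    (R : H →L[ℂ] H) (hcomm : ∀ L, R * HL L = HL L * R)
    (hcauchy : ∀ ε > (0 : ℝ), ∃ N : ℕ, ∀ L ≥ N, ∀ M ≥ N, ‖R * (HL L - HL M)‖ < ε)
    (t : ℝ) :
    ∀ ε > (0 : ℝ), ∃ N : ℕ, ∀ L ≥ N, ∀ M ≥ N,
      ‖R * (exp ((Complex.I * t) • HL L) - exp ((Complex.I * t) • HL M))‖ < ε := by
  intro ε hε
  obtain ⟨N, hN⟩ := hcauchy (ε / (|t| + 1)) (by positivity)
  refine ⟨N, fun L hL M hM => lt_of_le_of_lt (key_estimate (hsa L) (hsa M) (hcomm L) t) ?_⟩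
  have hx := hN L hL M hM
  have hpos : (0 : ℝ) < |t| + 1 := by positivity
  have hx' : ‖R * (HL L - HL M)‖ * (|t| + 1) < ε := (lt_div_iff₀ hpos).mp hx
  nlinarith [norm_nonneg (R * (HL L - HL M)), abs_nonneg t]
end

section
/- Let (φ_l)_{l∈ℕ} be a Hilbert (orthonormal) basis of a complex Hilbert space H, let P_l be the orthogonal projection onto the span of φ_l (P_l x = ⟨φ_l, x⟩ φ_l), and let R be a bounded operator on H with R φ_l = (1 + l)^{-1} φ_l for every l. Let (h_l) be ANY sequence of real numbers and set H_L := Σ_{l=0}^L h_l P_l. Then for every t ∈ ℝ and all natural numbers M ≤ L, ‖R (exp(i t H_L) − exp(i t H_M))‖ ≤ 2 √(Σ_{k=M+1}^{L} (1+k)^{-2}); consequently, for every t ∈ ℝ, ‖R (exp(i t H_L) − exp(i t H_M))‖ → 0 as L, M → ∞. -/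
open NormedSpace

theorem exp_sum_idem {A : Type*} [NormedRing A] [NormedAlgebra ℂ A] [CompleteSpace A]
    (s : Finset ℕ) (c : ℕ → ℂ) (P : ℕ → A)
    (hmul : ∀ l m, P l * P m = if l = m then P m else 0) :
    exp (∑ l ∈ s, c l • P l) = 1 + ∑ l ∈ s, (Complex.exp (c l) - 1) • P l := by
  set T := ∑ l ∈ s, c l • P l with hT
  have hpow : ∀ n : ℕ, T ^ (n + 1) = ∑ l ∈ s, (c l) ^ (n + 1) • P l := by
    intro n
    induction n with
    | zero => simp [hT]
    | succ n ih =>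
      rw [pow_succ, ih, hT, Finset.sum_mul_sum]
      refine Finset.sum_congr rfl (fun l hl => ?_)
      have step : ∀ m ∈ s, (c l ^ (n+1) • P l) * (c m • P m)
          = if l = m then (c l ^ (n+1) * c m) • P m else 0 := by
        intro m hm
        rw [smul_mul_smul_comm, hmul]
        split <;> simp
      rw [Finset.sum_congr rfl step, Finset.sum_ite_eq s l
        (fun m => (c l ^ (n+1) * c m) • P m)]
      simp [hl, pow_succ]
  have hg : HasSum (fun n : ℕ => ((n.factorial : ℂ))⁻¹ • T ^ n)
      (1 + ∑ l ∈ s, (Complex.exp (c l) - 1) • P l) := by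
    have hshift : HasSum (fun n : ℕ => (((n+1).factorial : ℂ))⁻¹ • T ^ (n+1))
        (∑ l ∈ s, (Complex.exp (c l) - 1) • P l) := by
      have hterm : ∀ l ∈ s, HasSum (fun n : ℕ => ((c l) ^ (n+1) / (((n+1).factorial : ℂ))) • P l)
          ((Complex.exp (c l) - 1) • P l) := by
        intro l _
        have h1 : HasSum (fun n : ℕ => (c l) ^ n / ((n.factorial : ℂ))) (Complex.exp (c l)) := by
          simpa [Complex.exp_eq_exp_ℂ] using expSeries_div_hasSum_exp (c l)
        have h2 : HasSum (fun n : ℕ => (c l) ^ (n+1) / (((n+1).factorial : ℂ)))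
            (Complex.exp (c l) - 1) := by
          have := (hasSum_nat_add_iff' 1).mpr h1
          simpa using this
        exact h2.smul_const (P l)
      have hsum := hasSum_sum hterm
      have heq : (fun n : ℕ => ∑ l ∈ s, ((c l) ^ (n+1) / (((n+1).factorial : ℂ))) • P l)
          = fun n : ℕ => (((n+1).factorial : ℂ))⁻¹ • T ^ (n+1) := by
        funext n
        rw [hpow, Finset.smul_sum]
        refine Finset.sum_congr rfl (fun l _ => ?_)
        rw [smul_smul, div_eq_inv_mul]
      rwa [heq] at hsum
    have h0 : (((0:ℕ).factorial : ℂ))⁻¹ • T ^ 0 = (1 : A) := by simp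
    refine (hasSum_nat_add_iff' (f := fun n : ℕ => ((n.factorial : ℂ))⁻¹ • T ^ n) 1).mp ?_
    simpa [Finset.sum_range_one, h0, add_sub_cancel_left] using hshift
  rw [exp_eq_tsum (𝕂 := ℂ)]
  exact hg.tsum_eq


lemma opnorm_bound {H : Type*} [NormedAddCommGroup H] [InnerProductSpace ℂ H]
    (φ : ℕ → H) (hφ_on : Orthonormal ℂ φ)
    (P : ℕ → H →L[ℂ] H)
    (hP : ∀ l, ∀ x : H, P l x = (inner ℂ (φ l) x : ℂ) • φ l)
    (s : Finset ℕ) (a : ℕ → ℂ) :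
    ‖∑ l ∈ s, a l • P l‖ ≤ Real.sqrt (∑ l ∈ s, ‖a l‖ ^ 2) := by
  refine ContinuousLinearMap.opNorm_le_bound _ (Real.sqrt_nonneg _) (fun x => ?_)
  have hx : (∑ l ∈ s, a l • P l) x = ∑ l ∈ s, (a l * inner ℂ (φ l) x) • φ l := by
    rw [ContinuousLinearMap.sum_apply]
    refine Finset.sum_congr rfl (fun l _ => ?_)
    rw [ContinuousLinearMap.smul_apply, hP, smul_smul]
  have hns : ‖∑ l ∈ s, (a l * (inner ℂ (φ l) x : ℂ)) • φ l‖ ^ 2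
      = ∑ l ∈ s, ‖a l * (inner ℂ (φ l) x : ℂ)‖ ^ 2 := by
    have hi := hφ_on.inner_sum (fun l => a l * inner ℂ (φ l) x)
      (fun l => a l * inner ℂ (φ l) x) s
    have h1 : (inner ℂ (∑ l ∈ s, (a l * (inner ℂ (φ l) x : ℂ)) • φ l)
        (∑ l ∈ s, (a l * (inner ℂ (φ l) x : ℂ)) • φ l) : ℂ)
        = (‖∑ l ∈ s, (a l * (inner ℂ (φ l) x : ℂ)) • φ l‖ : ℂ) ^ 2 := by
      rw [inner_self_eq_norm_sq_to_K]; norm_cast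
    rw [h1] at hi
    have h2 : ∀ l ∈ s, (starRingEnd ℂ) (a l * (inner ℂ (φ l) x : ℂ))
        * (a l * (inner ℂ (φ l) x : ℂ)) = ((‖a l * (inner ℂ (φ l) x : ℂ)‖ : ℂ)) ^ 2 := by
      intro l _
      rw [RCLike.conj_mul]
      norm_cast
    rw [Finset.sum_congr rfl h2] at hi
    exact_mod_cast hi
  have hb : ∑ l ∈ s, ‖a l * (inner ℂ (φ l) x : ℂ)‖ ^ 2 ≤ (∑ l ∈ s, ‖a l‖ ^ 2) * ‖x‖ ^ 2 := by
    rw [Finset.sum_mul]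
    refine Finset.sum_le_sum (fun l _ => ?_)
    rw [norm_mul, mul_pow]
    gcongr
    have h3 := norm_inner_le_norm (𝕜 := ℂ) (φ l) x
    simpa [hφ_on.1 l] using h3
  rw [hx]
  have h4 : ‖∑ l ∈ s, (a l * (inner ℂ (φ l) x : ℂ)) • φ l‖
      = Real.sqrt (‖∑ l ∈ s, (a l * (inner ℂ (φ l) x : ℂ)) • φ l‖ ^ 2) :=
    (Real.sqrt_sq (norm_nonneg _)).symm
  rw [h4, hns]
  calc Real.sqrt (∑ l ∈ s, ‖a l * (inner ℂ (φ l) x : ℂ)‖ ^ 2)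
      ≤ Real.sqrt ((∑ l ∈ s, ‖a l‖ ^ 2) * ‖x‖ ^ 2) := Real.sqrt_le_sqrt hb
    _ = Real.sqrt (∑ l ∈ s, ‖a l‖ ^ 2) * ‖x‖ := by
        rw [Real.sqrt_mul (Finset.sum_nonneg fun l _ => sq_nonneg _),
          Real.sqrt_sq (norm_nonneg _)]

lemma sqrt_sum_le (s : Finset ℕ) (g : ℕ → ℝ) (hg : ∀ l, 0 ≤ g l)
    (d : ℕ → ℂ) (hd : ∀ l, ‖d l‖ ^ 2 ≤ 4 * g l) :
    Real.sqrt (∑ l ∈ s, ‖d l‖ ^ 2) ≤ 2 * Real.sqrt (∑ k ∈ s, g k) := by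
  calc Real.sqrt (∑ l ∈ s, ‖d l‖ ^ 2)
      ≤ Real.sqrt (∑ l ∈ s, 4 * g l) :=
        Real.sqrt_le_sqrt (Finset.sum_le_sum fun l _ => hd l)
    _ = 2 * Real.sqrt (∑ k ∈ s, g k) := by
        rw [← Finset.mul_sum, show (4:ℝ) = 2 ^ 2 by norm_num, Real.sqrt_mul (by positivity),
          Real.sqrt_sq (by norm_num : (0:ℝ) ≤ 2)]

lemma coef_bound (t hl : ℝ) (l : ℕ) :
    ‖(((((1 : ℝ) + l)⁻¹ : ℝ) : ℂ) * (Complex.exp (Complex.I * t * hl) - 1))‖ ^ 2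
      ≤ 4 * ((1 : ℝ) + l)⁻¹ ^ 2 := by
  have h1 : ‖((((1 : ℝ) + l)⁻¹ : ℝ) : ℂ)‖ = ((1 : ℝ) + l)⁻¹ := by
    rw [Complex.norm_real, Real.norm_eq_abs, abs_of_nonneg]
    positivity
  have h2 : ‖Complex.exp (Complex.I * t * hl) - 1‖ ≤ 2 := by
    refine le_trans (norm_sub_le _ _) ?_
    have hone : ‖Complex.exp (Complex.I * t * hl)‖ = 1 := by
      rw [Complex.norm_exp]
      simp [Complex.mul_re, Complex.mul_im]
    simp only [hone, norm_one]; norm_num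
  rw [norm_mul, mul_pow, h1]
  calc ((1:ℝ) + l)⁻¹ ^ 2 * ‖Complex.exp (Complex.I * t * hl) - 1‖ ^ 2
      ≤ ((1:ℝ) + l)⁻¹ ^ 2 * 2 ^ 2 :=
        mul_le_mul_of_nonneg_left (pow_le_pow_left₀ (norm_nonneg _) h2 2) (by positivity)
    _ = 4 * ((1:ℝ) + l)⁻¹ ^ 2 := by ring

set_option maxHeartbeats 1000000 in
/-- (Example 1 of Section IV of the paper.) Let `(φ_l)` be an
orthonormal basis of `H`, `P_l` the rank-one projection onto `φ_l`, and `R` the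
operator with `R φ_l = (1+l)^{-1} φ_l` (realizing `S^{-1} = (1+N)^{-1}`). Then
for ANY real sequence `(h_l)`, with `H_L = Σ_{l≤L} h_l P_l`, one has
`‖R (exp(i t H_L) − exp(i t H_M))‖ ≤ 2 √(Σ_{k=M+1}^L (1+k)^{-2})` for `M ≤ L`,
and consequently `‖R (exp(i t H_L) − exp(i t H_M))‖ → 0` as `L, M → ∞`. -/
theorem stmt_17 {H : Type*} [NormedAddCommGroup H] [InnerProductSpace ℂ H] [CompleteSpace H]
    (φ : ℕ → H) (hφ_on : Orthonormal ℂ φ)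
    (hφ_complete : ∀ x : H, HasSum (fun l => (inner ℂ (φ l) x : ℂ) • φ l) x)
    (P : ℕ → H →L[ℂ] H)
    (hP : ∀ l, ∀ x : H, P l x = (inner ℂ (φ l) x : ℂ) • φ l)
    (R : H →L[ℂ] H)
    (hR : ∀ l, R (φ l) = ((((1 : ℝ) + l)⁻¹ : ℝ) : ℂ) • φ l)
    (h : ℕ → ℝ)
    (HL : ℕ → H →L[ℂ] H)
    (hHL : ∀ L, HL L = ∑ l ∈ Finset.range (L + 1), (h l : ℂ) • P l)
    (t : ℝ) :
    (∀ M L : ℕ, M ≤ L →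
      ‖R * (exp ((Complex.I * t) • HL L) - exp ((Complex.I * t) • HL M))‖ ≤
        2 * Real.sqrt (∑ k ∈ Finset.Ioc M L, ((1 : ℝ) + k)⁻¹ ^ 2)) ∧
    (∀ ε > (0 : ℝ), ∃ N : ℕ, ∀ L ≥ N, ∀ M ≥ N,
      ‖R * (exp ((Complex.I * t) • HL L) - exp ((Complex.I * t) • HL M))‖ < ε) := by
  have horth : ∀ i j, (inner ℂ (φ i) (φ j) : ℂ) = if i = j then 1 else 0 :=
    orthonormal_iff_ite.mp hφ_on
  have hPmul : ∀ l m, P l * P m = if l = m then P m else 0 := by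
    intro l m
    ext x
    by_cases hlm : l = m
    · subst hlm
      simp [ContinuousLinearMap.mul_apply, hP, inner_smul_right, horth l l, hφ_on.1 l]
    · simp [ContinuousLinearMap.mul_apply, hP, inner_smul_right, horth l m, hlm]
  have hexp : ∀ L : ℕ, exp ((Complex.I * t) • HL L)
      = 1 + ∑ l ∈ Finset.range (L+1), (Complex.exp (Complex.I * t * h l) - 1) • P l := by
    intro L
    have hs : (Complex.I * t) • HL L
        = ∑ l ∈ Finset.range (L+1), (Complex.I * t * h l) • P l := by
      rw [hHL, Finset.smul_sum]
      exact Finset.sum_congr rfl (fun l _ => by rw [smul_smul])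
    rw [hs, exp_sum_idem _ _ _ hPmul]
  have hdiff : ∀ M L : ℕ, M ≤ L →
      exp ((Complex.I * t) • HL L) - exp ((Complex.I * t) • HL M)
        = ∑ l ∈ Finset.Ioc M L, (Complex.exp (Complex.I * t * h l) - 1) • P l := by
    intro M L hML
    rw [hexp, hexp, add_sub_add_left_eq_sub, ← Finset.Ico_add_one_add_one_eq_Ioc,
      Finset.sum_Ico_eq_sub _ (Nat.add_le_add_right hML 1)]
  have hRP : ∀ l : ℕ, R * P l = ((((1 : ℝ) + l)⁻¹ : ℝ) : ℂ) • P l := by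
    intro l
    ext x
    simp [ContinuousLinearMap.mul_apply, hP, map_smul, hR, smul_smul, mul_comm]
  have hmain : ∀ M L : ℕ, M ≤ L →
      R * (exp ((Complex.I * t) • HL L) - exp ((Complex.I * t) • HL M))
        = ∑ l ∈ Finset.Ioc M L,
            (((((1 : ℝ) + l)⁻¹ : ℝ) : ℂ) * (Complex.exp (Complex.I * t * h l) - 1)) • P l := by
    intro M L hML
    rw [hdiff M L hML, Finset.mul_sum]
    refine Finset.sum_congr rfl (fun l _ => ?_)
    rw [mul_smul_comm, hRP, smul_smul, mul_comm]
  have hnorm := opnorm_bound φ hφ_on P hP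
  -- part 1
  have part1 : ∀ M L : ℕ, M ≤ L →
      ‖R * (exp ((Complex.I * t) • HL L) - exp ((Complex.I * t) • HL M))‖ ≤
        2 * Real.sqrt (∑ k ∈ Finset.Ioc M L, ((1 : ℝ) + k)⁻¹ ^ 2) := by
    intro M L hML
    rw [hmain M L hML]
    refine le_trans (hnorm (Finset.Ioc M L)
      (fun l => (((((1 : ℝ) + l)⁻¹ : ℝ) : ℂ) * (Complex.exp (Complex.I * t * h l) - 1)))) ?_
    exact sqrt_sum_le (Finset.Ioc M L) (fun k => ((1 : ℝ) + k)⁻¹ ^ 2) (fun l => sq_nonneg _)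
      (fun l => (((((1 : ℝ) + l)⁻¹ : ℝ) : ℂ) * (Complex.exp (Complex.I * t * h l) - 1)))
      (fun l => coef_bound t (h l) l)
  refine ⟨part1, ?_⟩
  -- part 2
  intro ε hε
  set f : ℕ → ℝ := fun k => ((1 : ℝ) + k)⁻¹ ^ 2 with hf
  have hsumm : Summable f := by
    have h1 : Summable (fun n : ℕ => 1 / (n : ℝ) ^ 2) :=
      Real.summable_one_div_nat_pow.mpr (by norm_num)
    have h2 : Summable (fun n : ℕ => 1 / ((n + 1 : ℕ) : ℝ) ^ 2) :=
      (summable_nat_add_iff 1).mpr h1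
    refine h2.congr (fun k => ?_)
    rw [hf]
    push_cast
    rw [inv_pow, inv_eq_one_div]
    ring_nf
  set S : ℕ → ℝ := fun n => ∑ i ∈ Finset.range n, f i with hS
  have hcauchy : CauchySeq S := hsumm.hasSum.tendsto_sum_nat.cauchySeq
  obtain ⟨N, hN⟩ := Metric.cauchySeq_iff.mp hcauchy ((ε / 2) ^ 2) (by positivity)
  refine ⟨N, fun L hL M hM => ?_⟩
  have key : ∀ M L : ℕ, N ≤ M → M ≤ L →
      ‖R * (exp ((Complex.I * t) • HL L) - exp ((Complex.I * t) • HL M))‖ < ε := by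
    intro M L hNM hML
    refine lt_of_le_of_lt (part1 M L hML) ?_
    have hIoc : ∑ k ∈ Finset.Ioc M L, f k = S (L + 1) - S (M + 1) := by
      rw [hS, ← Finset.Ico_add_one_add_one_eq_Ioc, Finset.sum_Ico_eq_sub _ (Nat.add_le_add_right hML 1)]
    have hd := hN (L + 1) (by omega) (M + 1) (by omega)
    rw [Real.dist_eq] at hd
    have hlt : ∑ k ∈ Finset.Ioc M L, f k < (ε / 2) ^ 2 := by
      rw [hIoc]
      calc S (L+1) - S (M+1) ≤ |S (L+1) - S (M+1)| := le_abs_self _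
        _ < (ε / 2) ^ 2 := hd
    have h2 : Real.sqrt (∑ k ∈ Finset.Ioc M L, f k) < ε / 2 := by
      have := Real.sqrt_lt_sqrt (Finset.sum_nonneg fun k _ => sq_nonneg _) hlt
      rwa [Real.sqrt_sq (le_of_lt (half_pos hε))] at this
    linarith
  rcases le_total M L with hML | hLM
  · exact key M L hM hML
  · have hsym : ‖R * (exp ((Complex.I * t) • HL L) - exp ((Complex.I * t) • HL M))‖
        = ‖R * (exp ((Complex.I * t) • HL M) - exp ((Complex.I * t) • HL L))‖ := by
      rw [mul_sub, mul_sub, norm_sub_rev]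
    rw [hsym]
    exact key L M hL hLM
end

section
/- Let H be a complex Hilbert space. Let (P_l)_{l∈ℕ} be a family of pairwise-orthogonal orthogonal projections which is complete (for every x ∈ H the series Σ_l P_l x converges to x), and let (Π_k)_{k∈ℕ} be another family of pairwise-orthogonal orthogonal projections. Let (h_k) be real numbers and set H_L := Σ_{k=0}^L h_k Π_k. Let n ≥ 1, and let (s_l) be strictly positive reals such that the sequence (s_l^{-n}) is nonincreasing and summable; let R be a bounded operator with R P_l = s_l^{-n} P_l for all l. Assume there are nonnegative reals (β_j) with Σ_j β_j < ∞ such that P_l Π_k = 0 whenever l < k and ‖P_{k+j} Π_k‖ ≤ β_j for all k, j ≥ 0. Then for every t ∈ ℝ and all M ≤ L: ‖R (exp(i t H_L) − exp(i t H_M))‖ ≤ 2 (Σ_{j=0}^∞ β_j) (Σ_{k=M+1}^{L} s_k^{-n}); consequently ‖R (exp(i t H_L) − exp(i t H_M))‖ → 0 as L, M → ∞. -/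
open NormedSpace

set_option maxHeartbeats 1000000 in
lemma exp_smul_idem_aux {A : Type*} [NormedRing A] [NormedAlgebra ℂ A] [CompleteSpace A]
    (c : ℂ) (p : A) (hp : p * p = p) :
    exp (c • p) = 1 + (Complex.exp c - 1) • p := by
  have hpi : IsIdempotentElem p := hp
  have hsum : Summable fun m : ℕ => ((m.factorial : ℂ))⁻¹ • (c • p) ^ m :=
    expSeries_summable' (𝕂 := ℂ) (c • p)
  have hsumc : Summable fun m : ℕ => ((m.factorial : ℂ))⁻¹ • c ^ m :=
    expSeries_summable' (𝕂 := ℂ) c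
  have hsumc' : Summable fun m : ℕ => (((m+1).factorial : ℂ))⁻¹ • c ^ (m+1) :=
    (summable_nat_add_iff 1).mpr hsumc
  have hterm : ∀ m : ℕ, ((((m+1)).factorial : ℂ))⁻¹ • (c • p) ^ (m+1)
      = ((((m+1)).factorial : ℂ))⁻¹ • c ^ (m+1) • p := by
    intro m
    rw [smul_pow, hpi.pow_succ_eq]
  have e1 : exp (c • p) = ∑' m : ℕ, ((m.factorial : ℂ))⁻¹ • (c • p) ^ m := by
    rw [exp_eq_tsum ℂ]
  rw [e1, Summable.tsum_eq_zero_add hsum]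
  simp only [hterm]
  have e2 : (∑' m : ℕ, (((m+1).factorial : ℂ))⁻¹ • c ^ (m+1) • p)
      = (∑' m : ℕ, (((m+1).factorial : ℂ))⁻¹ • c ^ (m+1)) • p := by
    rw [← Summable.tsum_smul_const hsumc']
    simp [smul_smul]
  have e3 : (∑' m : ℕ, (((m+1).factorial : ℂ))⁻¹ • c ^ (m+1)) = Complex.exp c - 1 := by
    have e4 : Complex.exp c = ∑' m : ℕ, ((m.factorial : ℂ))⁻¹ • c ^ m := by
      rw [Complex.exp_eq_exp_ℂ, exp_eq_tsum ℂ]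
    rw [e4, Summable.tsum_eq_zero_add hsumc]
    simp
  rw [e2, e3]
  simp

set_option maxHeartbeats 1000000 in
/-- (Example 3 of Section IV of the paper, condition (ex1).)
Here the Hamiltonians `H_L = Σ_{k≤L} h_k Pi2_k` are built from a spectral family
`(Pi2_k)` different from the family `(P_l)` diagonalizing `S`. If `P_l Π_k = 0`
for `l < k` and `‖P_{k+j} Pi2_k‖ ≤ β_j` with `(β_j) ∈ ℓ¹`, and `(s_l^{-n})` is
nonincreasing and summable, then for `M ≤ L`,
`‖R (exp(i t H_L) − exp(i t H_M))‖ ≤ 2 (Σ_j β_j)(Σ_{k=M+1}^L s_k^{-n})`, and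
consequently `‖R (exp(i t H_L) − exp(i t H_M))‖ → 0` as `L, M → ∞`. -/
theorem stmt_18 {H : Type*} [NormedAddCommGroup H] [InnerProductSpace ℂ H] [CompleteSpace H]
    (P : ℕ → H →L[ℂ] H)
    (hP_sa : ∀ l, IsSelfAdjoint (P l))
    (hP_idem : ∀ l, P l * P l = P l)
    (hP_orth : ∀ l k, l ≠ k → P l * P k = 0)
    (hP_complete : ∀ x : H, HasSum (fun l => P l x) x)
    (Pi2 : ℕ → H →L[ℂ] H)
    (hPi2_sa : ∀ k, IsSelfAdjoint (Pi2 k))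
    (hPi2_idem : ∀ k, Pi2 k * Pi2 k = Pi2 k)
    (hPi2_orth : ∀ k j, k ≠ j → Pi2 k * Pi2 j = 0)
    (h : ℕ → ℝ)
    (HL : ℕ → H →L[ℂ] H)
    (hHL : ∀ L, HL L = ∑ k ∈ Finset.range (L + 1), (h k : ℂ) • Pi2 k)
    (n : ℕ) (hn : 1 ≤ n)
    (s : ℕ → ℝ) (hs : ∀ l, 0 < s l)
    (hs_mono : Antitone fun l => (s l ^ n)⁻¹)
    (hs_sum : Summable fun l => (s l ^ n)⁻¹)
    (R : H →L[ℂ] H)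
    (hR : ∀ l, R * P l = (((s l ^ n)⁻¹ : ℝ) : ℂ) • P l)
    (β : ℕ → ℝ) (hβ_nonneg : ∀ j, 0 ≤ β j) (hβ_sum : Summable β)
    (hPPi2_zero : ∀ l k, l < k → P l * Pi2 k = 0)
    (hPPi2_bound : ∀ k j : ℕ, ‖P (k + j) * Pi2 k‖ ≤ β j)
    (t : ℝ) :
    (∀ M L : ℕ, M ≤ L →
      ‖R * (exp ((Complex.I * t) • HL L) - exp ((Complex.I * t) • HL M))‖ ≤
        2 * (∑' j, β j) * (∑ k ∈ Finset.Ioc M L, (s k ^ n)⁻¹)) ∧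
    (∀ ε > (0 : ℝ), ∃ N : ℕ, ∀ L ≥ N, ∀ M ≥ N,
      ‖R * (exp ((Complex.I * t) • HL L) - exp ((Complex.I * t) • HL M))‖ < ε) := by
  -- abbreviations
  set d : ℕ → ℂ := fun k => Complex.exp (Complex.I * t * h k) - 1 with hd
  -- products of the regularized Hamiltonian sums with later projections vanish
  have hmul0 : ∀ (L : ℕ) (c : ℕ → ℂ),
      (∑ k ∈ Finset.range (L+1), c k • Pi2 k) * Pi2 (L+1) = 0 := by
    intro L c
    rw [Finset.sum_mul]
    apply Finset.sum_eq_zero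
    intro k hk
    have hkL : k ≠ L + 1 := by
      have := Finset.mem_range.mp hk; omega
    rw [smul_mul_assoc, hPi2_orth k (L+1) hkL, smul_zero]
  have hmul0' : ∀ (L : ℕ) (c : ℕ → ℂ),
      Pi2 (L+1) * (∑ k ∈ Finset.range (L+1), c k • Pi2 k) = 0 := by
    intro L c
    rw [Finset.mul_sum]
    apply Finset.sum_eq_zero
    intro k hk
    have hkL : L + 1 ≠ k := by
      have := Finset.mem_range.mp hk; omega
    rw [mul_smul_comm, hPi2_orth (L+1) k hkL, smul_zero]
  have hsmulsum : ∀ L : ℕ, (Complex.I * t) • HL L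
      = ∑ k ∈ Finset.range (L+1), (Complex.I * t * h k) • Pi2 k := by
    intro L
    rw [hHL, Finset.smul_sum]
    refine Finset.sum_congr rfl fun k _ => ?_
    rw [smul_smul]
  -- the exponential formula
  have hexp : ∀ L : ℕ, exp ((Complex.I * t) • HL L)
      = 1 + ∑ k ∈ Finset.range (L+1), d k • Pi2 k := by
    intro L
    induction L with
    | zero =>
      have h0 : (Complex.I * t) • HL 0 = (Complex.I * ↑t * ↑(h 0)) • Pi2 0 := by
        rw [hsmulsum 0]; simp
      rw [h0, exp_smul_idem_aux _ _ (hPi2_idem 0)]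
      simp [hd]
    | succ L ih =>
      have hA : (Complex.I * t) • HL (L+1)
          = (Complex.I * t) • HL L + (Complex.I * t * h (L+1)) • Pi2 (L+1) := by
        rw [hsmulsum (L+1), hsmulsum L, Finset.sum_range_succ]
      have hc1 : ((Complex.I * t) • HL L) * ((Complex.I * t * h (L+1)) • Pi2 (L+1)) = 0 := by
        rw [hsmulsum L, mul_smul_comm, hmul0 L _, smul_zero]
      have hc2 : ((Complex.I * t * h (L+1)) • Pi2 (L+1)) * ((Complex.I * t) • HL L) = 0 := by
        rw [hsmulsum L, smul_mul_assoc, hmul0' L _, smul_zero]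
      have hcomm : Commute ((Complex.I * t) • HL L) ((Complex.I * t * h (L+1)) • Pi2 (L+1)) := by
        show _ * _ = _ * _
        rw [hc1, hc2]
      rw [hA, (by let _ : NormedAlgebra ℚ (H →L[ℂ] H) := .restrictScalars ℚ ℂ (H →L[ℂ] H); exact exp_add_of_commute hcomm : exp (((Complex.I * t) • HL L) + ((Complex.I * t * h (L+1)) • Pi2 (L+1))) = exp ((Complex.I * t) • HL L) * exp ((Complex.I * t * h (L+1)) • Pi2 (L+1))), ih,
        exp_smul_idem_aux _ _ (hPi2_idem (L+1))]
      conv_rhs => rw [Finset.sum_range_succ]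
      have hz : (∑ k ∈ Finset.range (L+1), d k • Pi2 k) *
          ((Complex.exp (Complex.I * ↑t * ↑(h (L+1))) - 1) • Pi2 (L+1)) = 0 := by
        rw [mul_smul_comm, hmul0 L _, smul_zero]
      rw [mul_add, mul_one, add_mul, one_mul, hz, add_zero]
      simp only [hd]
      abel
  -- bound on ‖R * Pi2 k‖
  have htsum_nonneg : (0:ℝ) ≤ ∑' j, β j := tsum_nonneg hβ_nonneg
  have hspos : ∀ l, (0:ℝ) < (s l ^ n)⁻¹ := fun l => inv_pos.mpr (pow_pos (hs l) n)
  have hRPi : ∀ k : ℕ, ‖R * Pi2 k‖ ≤ (∑' j, β j) * (s k ^ n)⁻¹ := by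
    intro k
    apply ContinuousLinearMap.opNorm_le_bound
    · exact mul_nonneg htsum_nonneg (hspos k).le
    intro x
    set y : H := Pi2 k x with hy
    set f : ℕ → H := fun l => (((s l ^ n)⁻¹ : ℝ) : ℂ) • P l y with hf
    have h1 : HasSum f (R y) := by
      have := R.hasSum (hP_complete y)
      refine this.congr_fun fun l => ?_
      have := congrArg (fun T : H →L[ℂ] H => T y) (hR l)
      simpa [hf] using this.symm
    have hhead : ∑ i ∈ Finset.range k, f i = 0 := by
      apply Finset.sum_eq_zero
      intro l hl
      have hlk : l < k := Finset.mem_range.mp hl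
      have : P l y = (P l * Pi2 k) x := rfl
      rw [hf]
      simp only [this, hPPi2_zero l k hlk]
      simp
    have h3 : HasSum (fun j => f (j + k)) (R y) := by
      refine (hasSum_nat_add_iff k).mpr ?_
      rw [hhead, add_zero]
      exact h1
    have hbound : ∀ j : ℕ, ‖f (j + k)‖ ≤ ((s k ^ n)⁻¹ * ‖x‖) * β j := by
      intro j
      have e1 : ‖f (j + k)‖ = (s (j + k) ^ n)⁻¹ * ‖(P (j + k) * Pi2 k) x‖ := by
        rw [hf]
        simp only [norm_smul]
        congr 1
        rw [Complex.norm_real, Real.norm_eq_abs, abs_of_nonneg (hspos (j+k)).le]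
      rw [e1]
      have e2 : ‖(P (j + k) * Pi2 k) x‖ ≤ β j * ‖x‖ := by
        calc ‖(P (j + k) * Pi2 k) x‖ ≤ ‖P (j + k) * Pi2 k‖ * ‖x‖ :=
              (P (j + k) * Pi2 k).le_opNorm x
        _ ≤ β j * ‖x‖ := by
              have := hPPi2_bound k j
              rw [add_comm k j] at this
              exact mul_le_mul_of_nonneg_right this (norm_nonneg x)
      have e3 : (s (j + k) ^ n)⁻¹ ≤ (s k ^ n)⁻¹ := hs_mono (Nat.le_add_left k j)
      calc (s (j + k) ^ n)⁻¹ * ‖(P (j + k) * Pi2 k) x‖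
          ≤ (s k ^ n)⁻¹ * (β j * ‖x‖) := by
            apply mul_le_mul e3 e2 (norm_nonneg _) (hspos k).le
      _ = ((s k ^ n)⁻¹ * ‖x‖) * β j := by ring
    have hg : Summable fun j : ℕ => ((s k ^ n)⁻¹ * ‖x‖) * β j := hβ_sum.mul_left _
    have hfs : Summable fun j : ℕ => ‖f (j + k)‖ :=
      Summable.of_nonneg_of_le (fun j => norm_nonneg _) hbound hg
    have h4 : ‖R y‖ ≤ ∑' j, ‖f (j + k)‖ := by
      rw [← h3.tsum_eq]
      exact norm_tsum_le_tsum_norm hfs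
    have h5 : (∑' j, ‖f (j + k)‖) ≤ ∑' j, ((s k ^ n)⁻¹ * ‖x‖) * β j :=
      hfs.tsum_le_tsum hbound hg
    have h6 : (∑' j, ((s k ^ n)⁻¹ * ‖x‖) * β j) = ((s k ^ n)⁻¹ * ‖x‖) * ∑' j, β j :=
      tsum_mul_left
    have : ‖(R * Pi2 k) x‖ = ‖R y‖ := rfl
    rw [this]
    calc ‖R y‖ ≤ ((s k ^ n)⁻¹ * ‖x‖) * ∑' j, β j := by
          rw [← h6]; exact h4.trans h5
    _ = (∑' j, β j) * (s k ^ n)⁻¹ * ‖x‖ := by ring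
  -- norm of d k
  have hdle : ∀ k, ‖d k‖ ≤ 2 := by
    intro k
    rw [hd]
    calc ‖Complex.exp (Complex.I * t * h k) - 1‖
        ≤ ‖Complex.exp (Complex.I * t * h k)‖ + ‖(1:ℂ)‖ := norm_sub_le _ _
    _ ≤ 2 := by
        have : ‖Complex.exp (Complex.I * t * h k)‖ = 1 := by
          rw [Complex.norm_exp]
          simp [Complex.mul_re]
        rw [this]
        norm_num
  -- part 1
  have part1 : ∀ M L : ℕ, M ≤ L →
      ‖R * (exp ((Complex.I * t) • HL L) - exp ((Complex.I * t) • HL M))‖ ≤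
        2 * (∑' j, β j) * (∑ k ∈ Finset.Ioc M L, (s k ^ n)⁻¹) := by
    intro M L hML
    have hIoc : Finset.Ico (M+1) (L+1) = Finset.Ioc M L := by
      rw [Finset.Ico_add_one_right_eq_Icc, Finset.Icc_add_one_left_eq_Ioc]
    have hsplit : ∀ g : ℕ → H →L[ℂ] H,
        ∑ k ∈ Finset.range (L+1), g k
          = ∑ k ∈ Finset.range (M+1), g k + ∑ k ∈ Finset.Ioc M L, g k := by
      intro g
      rw [← hIoc, Finset.range_eq_Ico, Finset.range_eq_Ico]
      exact (Finset.sum_Ico_consecutive g (Nat.zero_le _) (by omega)).symm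
    have hdiff : exp ((Complex.I * t) • HL L) - exp ((Complex.I * t) • HL M)
        = ∑ k ∈ Finset.Ioc M L, d k • Pi2 k := by
      rw [hexp L, hexp M, hsplit (fun k => d k • Pi2 k)]
      abel
    rw [hdiff, Finset.mul_sum]
    calc ‖∑ k ∈ Finset.Ioc M L, R * (d k • Pi2 k)‖
        ≤ ∑ k ∈ Finset.Ioc M L, ‖R * (d k • Pi2 k)‖ := norm_sum_le _ _
    _ ≤ ∑ k ∈ Finset.Ioc M L, 2 * (∑' j, β j) * (s k ^ n)⁻¹ := by
        apply Finset.sum_le_sum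
        intro k _
        rw [mul_smul_comm, norm_smul]
        calc ‖d k‖ * ‖R * Pi2 k‖ ≤ 2 * ((∑' j, β j) * (s k ^ n)⁻¹) := by
              apply mul_le_mul (hdle k) (hRPi k) (norm_nonneg _) (by norm_num)
        _ = 2 * (∑' j, β j) * (s k ^ n)⁻¹ := by ring
    _ = 2 * (∑' j, β j) * (∑ k ∈ Finset.Ioc M L, (s k ^ n)⁻¹) := by
        rw [Finset.mul_sum]
  refine ⟨part1, ?_⟩
  -- part 2
  intro ε hε
  set C : ℝ := 2 * (∑' j, β j) + 1 with hC
  have hCpos : 0 < C := by positivity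
  have htail : Filter.Tendsto (fun i => ∑' k : ℕ, (s (k + i) ^ n)⁻¹)
      Filter.atTop (nhds 0) := tendsto_sum_nat_add (fun k => (s k ^ n)⁻¹)
  have hεC : 0 < ε / C := div_pos hε hCpos
  obtain ⟨N, hN⟩ := (Filter.tendsto_atTop'.mp htail) (Set.Ioo (-(ε/C)) (ε/C))
    (Ioo_mem_nhds (by linarith) hεC)
  -- key bound for M ≤ L both ≥ N
  have key : ∀ M L : ℕ, N ≤ M → M ≤ L →
      ‖R * (exp ((Complex.I * t) • HL L) - exp ((Complex.I * t) • HL M))‖ < ε := by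
    intro M L hNM hML
    have hb := part1 M L hML
    have htails : Summable fun j : ℕ => (s (j + (M+1)) ^ n)⁻¹ :=
      (summable_nat_add_iff (M+1)).mpr hs_sum
    have hsum_le : (∑ k ∈ Finset.Ioc M L, (s k ^ n)⁻¹)
        ≤ ∑' j : ℕ, (s (j + (M+1)) ^ n)⁻¹ := by
      have hIoc : Finset.Ioc M L = Finset.Ico (M+1) (L+1) := by
        rw [Finset.Ico_add_one_right_eq_Icc, Finset.Icc_add_one_left_eq_Ioc]
      rw [hIoc, Finset.sum_Ico_eq_sum_range]
      have : ∀ j, (s (M + 1 + j) ^ n)⁻¹ = (s (j + (M+1)) ^ n)⁻¹ := by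
        intro j; rw [add_comm]
      simp_rw [this]
      exact htails.sum_le_tsum _ (fun j _ => (hspos _).le)
    have htail_lt : (∑' j : ℕ, (s (j + (M+1)) ^ n)⁻¹) < ε / C := by
      have := hN (M+1) (by omega)
      exact this.2
    have htail_nonneg : (0:ℝ) ≤ ∑' j : ℕ, (s (j + (M+1)) ^ n)⁻¹ :=
      tsum_nonneg fun j => (hspos _).le
    calc ‖R * (exp ((Complex.I * t) • HL L) - exp ((Complex.I * t) • HL M))‖
        ≤ 2 * (∑' j, β j) * (∑ k ∈ Finset.Ioc M L, (s k ^ n)⁻¹) := hb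
    _ ≤ C * (∑' j : ℕ, (s (j + (M+1)) ^ n)⁻¹) := by
        apply mul_le_mul (by rw [hC]; linarith) hsum_le
          (Finset.sum_nonneg fun k _ => (hspos _).le) hCpos.le
    _ < C * (ε / C) := by
        exact mul_lt_mul_of_pos_left htail_lt hCpos
    _ = ε := by field_simp
  refine ⟨N, fun L hL M hM => ?_⟩
  rcases le_total M L with hML | hLM
  · exact key M L hM hML
  · have hsymm : R * (exp ((Complex.I * t) • HL L) - exp ((Complex.I * t) • HL M))
        = -(R * (exp ((Complex.I * t) • HL M) - exp ((Complex.I * t) • HL L))) := by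
      rw [← mul_neg, neg_sub]
    rw [hsymm, norm_neg]
    exact key L M hL hLM
end
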